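/- arXiv:0911.4851 — 6 statements merged into one kernel-verified Lean document; each statement's English description precedes it below -/
import Mathlib

section
/- Let G be a connected finite graph with a real structure. Then s(G) ≡ g(G) + 1 (mod 2), 0 ≤ s(G) ≤ g(G) + 1, s(G) ≠ g(G) + 1 in case a(G) = 1, and s(G) ≠ 0 in case a(G) = 0. -/
/-- A finite graph: finite sets of vertices and edges, and an incidence map
assigning to each edge the (unordered) pair of its ends (loops and multiple
edges are allowed). -/
structure FinGraph where
  V : Type
  E : Type
  [decV : DecidableEq V]
  [fintV : Fintype V]
  [fintE : Fintype E]
  ψ : E → Sym2 V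

attribute [instance] FinGraph.decV FinGraph.fintV FinGraph.fintE

namespace FinGraph

variable (G : FinGraph)

/-- Two vertices are adjacent if some edge has exactly them as its ends. -/
def Adj (v w : G.V) : Prop := ∃ e : G.E, G.ψ e = s(v, w)

/-- A graph is connected if it is nonempty and any two vertices are joined by a
walk (equivalently, related by the reflexive-transitive closure of adjacency). -/
def Connected : Prop := Nonempty G.V ∧ ∀ v w : G.V, Relation.ReflTransGen G.Adj v w

/-- The number of connected components. -/
noncomputable def numComponents : ℕ :=
  Nat.card (Quotient (Relation.EqvGen.setoid G.Adj))

/-- The genus `g(G) = c(G) + e(G) - v(G)`. -/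
noncomputable def genus : ℤ :=
  (numComponents G : ℤ) + (Fintype.card G.E : ℤ) - (Fintype.card G.V : ℤ)

/-- A real structure on a finite graph: involutions on vertices and edges
compatible with the incidence map. -/
structure RealStructure (G : FinGraph) where
  ιV : G.V → G.V
  ιE : G.E → G.E
  ιV_invol : ∀ v, ιV (ιV v) = v
  ιE_invol : ∀ e, ιE (ιE e) = e
  compat : ∀ e, G.ψ (ιE e) = (G.ψ e).map ιV

variable {G} (σ : RealStructure G)

/-- A vertex is real if it is fixed by the involution. -/
def RealV (v : G.V) : Prop := σ.ιV v = v

/-- An edge is real if it is fixed by the involution. -/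
def RealE (e : G.E) : Prop := σ.ιE e = e

/-- A real edge is isolated if some end of it is not a real vertex. -/
def IsolatedRealE (e : G.E) : Prop := RealE σ e ∧ ∃ v ∈ G.ψ e, ¬ RealV σ v

/-- A non-isolated real edge: a real edge all of whose ends are real vertices. -/
def NonIsolatedRealE (e : G.E) : Prop := RealE σ e ∧ ∀ v ∈ G.ψ e, RealV σ v

/-- The vertex set of the real locus graph `G(ℝ)`: the real vertices. -/
def RV := {v : G.V // RealV σ v}

/-- Adjacency in the real locus graph `G(ℝ)`: via non-isolated real edges. -/
def adjR (v w : RV σ) : Prop :=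
  ∃ e : G.E, NonIsolatedRealE σ e ∧ G.ψ e = s(v.1, w.1)

/-- The connected components of the real locus graph `G(ℝ)`. -/
def CompR := Quotient (Relation.EqvGen.setoid (adjR σ))

/-- The genus of a connected component of `G(ℝ)`:
`1 + (number of its edges) - (number of its vertices)`. -/
noncomputable def compGenus (c : CompR σ) : ℤ :=
  1 + (Nat.card {e : G.E // NonIsolatedRealE σ e ∧
        ∃ v : RV σ, v.1 ∈ G.ψ e ∧ Quotient.mk (Relation.EqvGen.setoid (adjR σ)) v = c} : ℤ)
    - (Nat.card {v : RV σ // Quotient.mk (Relation.EqvGen.setoid (adjR σ)) v = c} : ℤ)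

/-- The number `s(G) = e^i(G) + Σ_i (g(G(ℝ)_i) + 1)`. -/
noncomputable def sNum : ℤ :=
  (Nat.card {e : G.E // IsolatedRealE σ e} : ℤ) + ∑ᶠ c : CompR σ, (compGenus σ c + 1)

/-- One step of a walk containing no real vertex and no real edge. -/
def nonRealAdj (v w : G.V) : Prop :=
  ¬ RealV σ v ∧ ¬ RealV σ w ∧ ∃ e : G.E, ¬ RealE σ e ∧ G.ψ e = s(v, w)

/-- `a(G) = 1` iff there is a non-real vertex `v` and a walk from `v` to `v̄`
containing no real vertex and no real edge. -/
def aProp : Prop :=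
  ∃ v : G.V, ¬ RealV σ v ∧ Relation.ReflTransGen (nonRealAdj σ) v (σ.ιV v)

/-- `a(G)` as a number. -/
noncomputable def aNum : ℕ := @ite _ (aProp σ) (Classical.dec _) 1 0

/-- The degree of a divisor (a divisor on `G` is a function `G.V → ℤ`). -/
def deg (D : G.V → ℤ) : ℤ := ∑ v, D v

/-- A divisor is effective if all its coefficients are nonnegative. -/
def Eff (D : G.V → ℤ) : Prop := ∀ v, 0 ≤ D v

variable (G)

/-- The contribution of the edge `e` to the principal divisor `Δ(f)`. -/
def edgeLap (f : G.V → ℤ) (e : G.E) : G.V → ℤ :=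
  Sym2.lift ⟨fun a b v => (if v = a then f b - f a else 0) + (if v = b then f a - f b else 0),
    fun a b => funext fun v => add_comm _ _⟩ (G.ψ e)

/-- The principal divisor `Δ(f)(v) = Σ_{e, ψ(e) = {v,w}} (f(w) - f(v))`. -/
def Lap (f : G.V → ℤ) : G.V → ℤ := fun v => ∑ e, edgeLap G f e v

/-- Two divisors are linearly equivalent if their difference is principal. -/
def LinEquiv (D₁ D₂ : G.V → ℤ) : Prop := ∃ f : G.V → ℤ, D₂ = D₁ + Lap G f

variable {G}

/-- The conjugate divisor `D̄(v) = D(v̄)`. -/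
def conjDiv (D : G.V → ℤ) : G.V → ℤ := fun v => D (σ.ιV v)

/-- A divisor is real if it equals its conjugate. -/
def IsRealDiv (D : G.V → ℤ) : Prop := conjDiv σ D = D

variable (G)

/-- The divisor consisting of the single vertex `v`. -/
def unitDiv (v : G.V) : G.V → ℤ := fun w => if w = v then 1 else 0

/-- `RankGE G D r` : every effective divisor `E` of degree `r` is dominated by
some effective divisor `D'` linearly equivalent to `D`.  The rank `rk(D)` is
the greatest `r` with this property (note it holds vacuously for `r < 0`, so
the greatest such `r` is `-1` exactly when `|D| = ∅`). -/
def RankGE (D : G.V → ℤ) (r : ℤ) : Prop :=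
  ∀ E : G.V → ℤ, Eff E → deg E = r →
    ∃ D' : G.V → ℤ, LinEquiv G D D' ∧ Eff D' ∧ Eff (D' - E)

/-- `r` is the rank of `D`: it is the greatest element of `{r | RankGE G D r}`. -/
def HasRank (D : G.V → ℤ) (r : ℤ) : Prop := IsGreatest {r' : ℤ | RankGE G D r'} r

variable {G}

/-- The real analogue of `RankGE`, using real effective divisors only. -/
def RealRankGE (D : G.V → ℤ) (r : ℤ) : Prop :=
  ∀ E : G.V → ℤ, Eff E → IsRealDiv σ E → deg E = r →
    ∃ D' : G.V → ℤ, LinEquiv G D D' ∧ Eff D' ∧ IsRealDiv σ D' ∧ Eff (D' - E)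

/-- `r` is the real rank of `D`. -/
def HasRealRank (D : G.V → ℤ) (r : ℤ) : Prop :=
  IsGreatest {r' : ℤ | RealRankGE σ D r'} r

/-- An M-graph: a connected graph with a real structure, no isolated real
edges, and `s(G) = g(G) + 1`. -/
def IsMGraph : Prop :=
  G.Connected ∧ (∀ e : G.E, ¬ IsolatedRealE σ e) ∧ sNum σ = G.genus + 1

/-- A strong M-graph: an M-graph such that `G(ℝ)` has `g(G) + 1` connected
components. -/
def IsStrongMGraph : Prop :=
  IsMGraph σ ∧ (Nat.card (CompR σ) : ℤ) = G.genus + 1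

/-- The degree of the restriction of a divisor to the connected component `c`
of the real locus graph `G(ℝ)`. -/
noncomputable def degOn (c : CompR σ) (D : G.V → ℤ) : ℤ :=
  ∑ᶠ (v : {v : RV σ // Quotient.mk (Relation.EqvGen.setoid (adjR σ)) v = c}), D v.1.1

/-- The valence of a vertex: the number of edges incident to it. -/
noncomputable def valence (v : G.V) : ℤ := (Nat.card {e : G.E // v ∈ G.ψ e} : ℤ)

/-- The canonical divisor `K_G = Σ_v (val(v) - 2) v`. -/
noncomputable def canonicalDiv : G.V → ℤ := fun v => valence v - 2

end FinGraph

/-! ### Auxiliary development -/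

section Aux

open Relation Submodule Module

variable {α : Type}

/-- The setoid pairing `a` with `f a` for an involution `f`. -/
def pairSetoid (f : α → α) (hf : Function.Involutive f) : Setoid α where
  r a b := b = a ∨ b = f a
  iseqv := by
    constructor
    · intro a; exact Or.inl rfl
    · rintro a b (rfl | rfl)
      · exact Or.inl rfl
      · exact Or.inr (hf a).symm
    · rintro a b c (rfl | rfl) h
      · exact h
      · rcases h with rfl | rfl
        · exact Or.inr rfl
        · exact Or.inl (hf a)

lemma card_pair_quot [Fintype α] (f : α → α) (hf : Function.Involutive f)
    (hfree : ∀ a, f a ≠ a) :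
    Nat.card α = 2 * Nat.card (Quotient (pairSetoid f hf)) := by
  classical
  set S := pairSetoid f hf with hS
  have hfib : ∀ c : Quotient S, Nat.card {a // Quotient.mk S a = c} = 2 := by
    intro c
    obtain ⟨u, rfl⟩ := Quotient.exists_rep c
    have hiff : ∀ a : α, Quotient.mk S a = Quotient.mk S u ↔ a ∈ ({u, f u} : Set α) := by
      intro a
      rw [Quotient.eq]
      constructor
      · rintro (h | h)
        · exact Or.inl h.symm
        · refine Or.inr ?_
          have : f u = f (f a) := congrArg f h
          rw [hf a] at this
          exact this.symm
      · rintro (rfl | rfl)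
        · exact Or.inl rfl
        · exact Or.inr (hf u).symm
    have : Nat.card {a // Quotient.mk S a = Quotient.mk S u}
        = Nat.card ({u, f u} : Set α) := Nat.card_congr (Equiv.subtypeEquivRight hiff)
    rw [this, Nat.card_coe_set_eq, Set.ncard_pair (Ne.symm (hfree u))]
  calc Nat.card α = Nat.card ((c : Quotient S) × {a // Quotient.mk S a = c}) :=
        (Nat.card_congr (Equiv.sigmaFiberEquiv _)).symm
    _ = 2 * Nat.card (Quotient S) := by
        rw [Nat.card_eq_fintype_card, Fintype.card_sigma]
        rw [Nat.card_eq_fintype_card]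
        rw [Finset.sum_congr rfl (fun c _ => by
          rw [← Nat.card_eq_fintype_card, hfib c])]
        simp [mul_comm]

lemma sum_card_fibers {β : Type} [Fintype β] {γ : Type} [Fintype γ] (f : β → γ) :
    ∑ c : γ, Nat.card {b // f b = c} = Nat.card β := by
  classical
  calc ∑ c : γ, Nat.card {b // f b = c}
      = ∑ c : γ, Fintype.card {b // f b = c} := by
        refine Finset.sum_congr rfl (fun c _ => Nat.card_eq_fintype_card)
    _ = Fintype.card ((c : γ) × {b // f b = c}) := (Fintype.card_sigma).symm
    _ = Nat.card β := by
        rw [← Nat.card_eq_fintype_card]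
        exact Nat.card_congr (Equiv.sigmaFiberEquiv _)

lemma char2_sub {M : Type} [AddCommGroup M] [Module (ZMod 2) M] (x y : M) :
    x - y = x + y := by
  have h : y + y = 0 := by
    have : (2 : ZMod 2) • y = y + y := two_smul _ y
    rw [show (2 : ZMod 2) = 0 from rfl, zero_smul] at this
    exact this.symm
  rw [sub_eq_add_neg, neg_eq_of_add_eq_zero_right h]

lemma myRankLe {M : Type} [AddCommGroup M] [Module (ZMod 2) M] [Module.Finite (ZMod 2) M]
    {P C : Type} [Fintype P] [Fintype C] (N : Submodule (ZMod 2) M) (gen : P → M)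
    (hgen : N = span (ZMod 2) (Set.range gen))
    (q : C → M ⧸ N)
    (hq : ∀ x : M ⧸ N, x ∈ span (ZMod 2) (Set.range q)) :
    finrank (ZMod 2) M ≤ Fintype.card P + Fintype.card C := by
  classical
  subst hgen
  haveI : Fact (Nat.Prime 2) := ⟨Nat.prime_two⟩
  have h1 : finrank (ZMod 2) (span (ZMod 2) (Set.range gen)) ≤ Fintype.card P := by
    have h := finrank_span_le_card (R := ZMod 2) (Set.range gen)
    rw [Set.toFinset_range] at h
    exact le_trans h (le_trans Finset.card_image_le (le_of_eq (Finset.card_univ)))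
  have h2 : finrank (ZMod 2) (M ⧸ span (ZMod 2) (Set.range gen)) ≤ Fintype.card C := by
    have htop : span (ZMod 2) (Set.range q) = ⊤ := by
      rw [eq_top_iff]; intro x _; exact hq x
    have h := finrank_span_le_card (R := ZMod 2) (Set.range q)
    rw [Set.toFinset_range, htop] at h
    calc finrank (ZMod 2) (M ⧸ span (ZMod 2) (Set.range gen))
        = finrank (ZMod 2) (⊤ : Submodule (ZMod 2) (M ⧸ span (ZMod 2) (Set.range gen))) :=
          (finrank_top _ _).symm
      _ ≤ Fintype.card C :=
          le_trans h (le_trans Finset.card_image_le (le_of_eq (Finset.card_univ)))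
  have h3 := Submodule.finrank_quotient_add_finrank (span (ZMod 2) (Set.range gen) : Submodule (ZMod 2) M)
  omega

end Aux



/-! ### Main development -/

section Main

open Relation Submodule Module FinGraph

variable {G : FinGraph} (σ : RealStructure G)

lemma rtg_to_eqvgen {α : Type} {r : α → α → Prop} {a b : α}
    (h : Relation.ReflTransGen r a b) : Relation.EqvGen r a b := by
  induction h with
  | refl => exact Relation.EqvGen.refl _
  | tail _ h ih => exact Relation.EqvGen.trans _ _ _ ih (Relation.EqvGen.rel _ _ h)

lemma realV_iV (v : G.V) : RealV σ (σ.ιV v) ↔ RealV σ v := by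
  constructor
  · intro h
    have h' : σ.ιV (σ.ιV v) = σ.ιV v := h
    rw [σ.ιV_invol] at h'
    exact h'.symm
  · intro h
    show σ.ιV (σ.ιV v) = σ.ιV v
    rw [σ.ιV_invol, h]

lemma realE_iE (e : G.E) : RealE σ (σ.ιE e) ↔ RealE σ e := by
  constructor
  · intro h
    have h' : σ.ιE (σ.ιE e) = σ.ιE e := h
    rw [σ.ιE_invol] at h'
    exact h'.symm
  · intro h
    show σ.ιE (σ.ιE e) = σ.ιE e
    rw [σ.ιE_invol, h]

instance : DecidablePred (RealV σ) := fun v => inferInstanceAs (Decidable (σ.ιV v = v))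

instance : Fintype (RV σ) := Subtype.fintype _

noncomputable instance instFC : Fintype (CompR σ) := @Fintype.ofFinite _ (Quotient.finite _)

abbrev NVert := {v : G.V // ¬ RealV σ v}

abbrev NEdge := {e : G.E // ¬ RealE σ e}

noncomputable instance : Fintype (NEdge σ) := Fintype.ofFinite _

def jV : NVert σ → NVert σ := fun v =>
  ⟨σ.ιV v.1, fun h => v.2 ((realV_iV σ v.1).mp h)⟩

lemma jV_invol : Function.Involutive (jV σ) := fun v => Subtype.ext (σ.ιV_invol v.1)

lemma jV_free : ∀ v, jV σ v ≠ v := fun v h => v.2 (congrArg Subtype.val h)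

def jE : NEdge σ → NEdge σ := fun e =>
  ⟨σ.ιE e.1, fun h => e.2 ((realE_iE σ e.1).mp h)⟩

lemma jE_invol : Function.Involutive (jE σ) := fun e => Subtype.ext (σ.ιE_invol e.1)

lemma jE_free : ∀ e, jE σ e ≠ e := fun e h => e.2 (congrArg Subtype.val h)

abbrev PV := Quotient (pairSetoid (jV σ) (jV_invol σ))

abbrev PE := Quotient (pairSetoid (jE σ) (jE_invol σ))

noncomputable instance : Fintype (PV σ) := Fintype.ofFinite _

noncomputable instance : Fintype (PE σ) := Fintype.ofFinite _

noncomputable instance : Fintype {e : G.E // NonIsolatedRealE σ e} := Fintype.ofFinite _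

noncomputable instance : Fintype {e : G.E // IsolatedRealE σ e} := Fintype.ofFinite _

/-- The class map onto components of the real locus. -/
def mkC : RV σ → CompR σ := Quotient.mk (Relation.EqvGen.setoid (adjR σ))

def mkP : NVert σ → PV σ := Quotient.mk (pairSetoid (jV σ) (jV_invol σ))

lemma mkP_iV (v : G.V) (h : ¬ RealV σ v) (h' : ¬ RealV σ (σ.ιV v)) :
    mkP σ ⟨σ.ιV v, h'⟩ = mkP σ ⟨v, h⟩ :=
  Quotient.sound (Or.inr (Subtype.ext (σ.ιV_invol v).symm))

abbrev VHt := CompR σ ⊕ PV σ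

abbrev WHt := Option (VHt σ)

def xmap : G.V → VHt σ := fun v =>
  if h : RealV σ v then Sum.inl (mkC σ ⟨v, h⟩) else Sum.inr (mkP σ ⟨v, h⟩)

lemma xmap_iV (v : G.V) : xmap σ (σ.ιV v) = xmap σ v := by
  by_cases h : RealV σ v
  · rw [show σ.ιV v = v from h]
  · have h' : ¬ RealV σ (σ.ιV v) := fun hh => h ((realV_iV σ v).mp hh)
    rw [xmap, xmap, dif_neg h', dif_neg h]
    exact congrArg Sum.inr (mkP_iV σ v h h')

noncomputable def nrv : G.V → ZMod 2 := fun v =>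
  if h : RealV σ v then 0 else (if (mkP σ ⟨v, h⟩).out = ⟨v, h⟩ then 0 else 1)

lemma nrv_iV (v : G.V) (h : ¬ RealV σ v) : nrv σ (σ.ιV v) = 1 + nrv σ v := by
  have h' : ¬ RealV σ (σ.ιV v) := fun hh => h ((realV_iV σ v).mp hh)
  have hmk : mkP σ ⟨σ.ιV v, h'⟩ = mkP σ ⟨v, h⟩ := mkP_iV σ v h h'
  have hout : (mkP σ ⟨v, h⟩).out = ⟨v, h⟩ ∨ (mkP σ ⟨v, h⟩).out = ⟨σ.ιV v, h'⟩ := by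
    have hrel := Quotient.exact ((Quotient.out_eq (mkP σ ⟨v, h⟩)).trans rfl)
    rcases hrel with h1 | h1
    · exact Or.inl h1.symm
    · refine Or.inr ?_
      have := congrArg (jV σ) h1
      rw [jV_invol σ] at this
      exact Subtype.ext (congrArg Subtype.val this.symm)
  have hne : (⟨σ.ιV v, h'⟩ : NVert σ) ≠ ⟨v, h⟩ := by
    intro hh
    exact h (congrArg Subtype.val hh)
  rw [nrv, nrv, dif_neg h', dif_neg h, hmk]
  rcases hout with h1 | h1
  · rw [if_pos h1, if_neg (by rw [h1]; exact fun hh => hne hh.symm)]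
    decide
  · rw [if_pos h1, if_neg (by rw [h1]; exact hne)]
    decide

open scoped Classical in
/-- Indicator function. -/
noncomputable def indW (w : WHt σ) : WHt σ → ZMod 2 := fun x => if w = x then 1 else 0

lemma indW_sum (m : WHt σ → ZMod 2) : m = ∑ w, m w • indW σ w := by
  classical
  funext x
  rw [Finset.sum_apply]
  rw [Finset.sum_eq_single x]
  · show m x = m x • indW σ x x
    rw [indW, if_pos rfl, smul_eq_mul, mul_one]
  · intro w _ hw
    show m w • indW σ w x = 0
    rw [indW, if_neg hw, smul_eq_mul, mul_zero]
  · intro hx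
    exact absurd (Finset.mem_univ x) hx

noncomputable def twist (a b : G.V) : ZMod 2 :=
  if ¬ RealV σ a ∧ ¬ RealV σ b then nrv σ a + nrv σ b else 0

lemma twist_comm (a b : G.V) : twist σ a b = twist σ b a := by
  rw [twist, twist]
  by_cases ha : RealV σ a <;> by_cases hb : RealV σ b <;>
    simp [ha, hb, add_comm]

lemma twist_iV (a b : G.V) : twist σ (σ.ιV a) (σ.ιV b) = twist σ a b := by
  rw [twist, twist]
  by_cases ha : RealV σ a <;> by_cases hb : RealV σ b
  · rw [if_neg (fun hh => hh.1 ((realV_iV σ a).mpr ha)),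
      if_neg (fun hh => hh.1 ha)]
  · rw [if_neg (fun hh => hh.1 ((realV_iV σ a).mpr ha)),
      if_neg (fun hh => hh.1 ha)]
  · rw [if_neg (fun hh => hh.2 ((realV_iV σ b).mpr hb)),
      if_neg (fun hh => hh.2 hb)]
  · rw [if_pos ⟨fun hh => ha ((realV_iV σ a).mp hh), fun hh => hb ((realV_iV σ b).mp hh)⟩,
      if_pos ⟨ha, hb⟩, nrv_iV σ a ha, nrv_iV σ b hb]
    exact (show ∀ x y : ZMod 2, 1 + x + (1 + y) = x + y by decide) _ _

noncomputable def gfun (a b : G.V) : WHt σ → ZMod 2 :=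
  indW σ (some (xmap σ a)) + indW σ (some (xmap σ b)) + twist σ a b • indW σ none

lemma gfun_comm (a b : G.V) : gfun σ a b = gfun σ b a := by
  rw [gfun, gfun, twist_comm, add_comm (indW σ (some (xmap σ a)))]

noncomputable def g0 (e : G.E) : WHt σ → ZMod 2 :=
  Sym2.lift ⟨fun a b => gfun σ a b, fun a b => gfun_comm σ a b⟩ (G.ψ e)

lemma g0_eq (e : G.E) {a b : G.V} (h : G.ψ e = s(a, b)) : g0 σ e = gfun σ a b := by
  rw [g0, h, Sym2.lift_mk]

lemma g0_iE (e : G.E) : g0 σ (σ.ιE e) = g0 σ e := by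
  obtain ⟨a, b, hab⟩ : ∃ a b, G.ψ e = s(a, b) := ⟨_, _, (Quot.out_eq (G.ψ e)).symm⟩
  have h2 : G.ψ (σ.ιE e) = s(σ.ιV a, σ.ιV b) := by
    rw [σ.compat, hab, Sym2.map_pair_eq]
  rw [g0_eq σ e hab, g0_eq σ _ h2, gfun, gfun, xmap_iV, xmap_iV, twist_iV]

noncomputable def genB : PE σ → (WHt σ → ZMod 2) :=
  Quotient.lift (fun e : NEdge σ => g0 σ e.1) (by
    rintro e e' (rfl | rfl)
    · rfl
    · exact (g0_iE σ e.1).symm)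

/-- The span of the edge vectors for the quotient graph. -/
noncomputable def NB : Submodule (ZMod 2) (WHt σ → ZMod 2) :=
  span (ZMod 2) (Set.range (genB σ))

lemma g0_mem_NB (e : G.E) (he : ¬ RealE σ e) : g0 σ e ∈ NB σ :=
  subset_span ⟨Quotient.mk _ ⟨e, he⟩, rfl⟩

lemma neg_self {M : Type} [AddCommGroup M] [Module (ZMod 2) M] (x : M) : -x = x := by
  have := char2_sub (0 : M) x
  rw [zero_sub, zero_add] at this
  exact this

lemma step_all (v w : G.V) (h : G.Adj v w) :
    ∃ t : ZMod 2, (NB σ).mkQ (indW σ (some (xmap σ w)))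
      = (NB σ).mkQ (indW σ (some (xmap σ v))) + t • (NB σ).mkQ (indW σ none) := by
  obtain ⟨e, he⟩ := h
  by_cases hre : RealE σ e
  · refine ⟨0, ?_⟩
    rw [zero_smul, add_zero]
    have hmap : Sym2.map σ.ιV s(v, w) = s(v, w) := by
      rw [← he, ← σ.compat e, hre]
    rw [Sym2.map_pair_eq] at hmap
    have hx : xmap σ v = xmap σ w := by
      rcases Sym2.eq_iff.mp hmap with ⟨h1, h2⟩ | ⟨h1, h2⟩
      · -- both ends real
        have hv : RealV σ v := h1
        have hw : RealV σ w := h2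
        have hni : NonIsolatedRealE σ e := by
          refine ⟨hre, ?_⟩
          intro u hu
          rw [he, Sym2.mem_iff] at hu
          rcases hu with rfl | rfl
          · exact hv
          · exact hw
        have hadj : adjR σ ⟨v, hv⟩ ⟨w, hw⟩ := ⟨e, hni, he⟩
        rw [xmap, xmap, dif_pos hv, dif_pos hw]
        exact congrArg Sum.inl (Quotient.sound (Relation.EqvGen.rel _ _ hadj))
      · -- ιV v = w
        rw [← h1, xmap_iV]
    rw [hx]
  · refine ⟨twist σ v w, ?_⟩
    have h0 : (NB σ).mkQ (g0 σ e) = 0 := by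
      rw [Submodule.mkQ_apply, Submodule.Quotient.mk_eq_zero]
      exact g0_mem_NB σ e hre
    rw [g0_eq σ e he, gfun, map_add, map_add, map_smul] at h0
    have h1 : (NB σ).mkQ (indW σ (some (xmap σ w)))
        = -((NB σ).mkQ (indW σ (some (xmap σ v)))
            + twist σ v w • (NB σ).mkQ (indW σ none)) := by
      refine eq_neg_of_add_eq_zero_left ?_
      rw [← h0]; abel
    rw [h1, neg_self]

lemma step_nr (v w : G.V) (h : nonRealAdj σ v w) :
    (NB σ).mkQ (indW σ (some (xmap σ w))) + nrv σ w • (NB σ).mkQ (indW σ none)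
      = (NB σ).mkQ (indW σ (some (xmap σ v))) + nrv σ v • (NB σ).mkQ (indW σ none) := by
  obtain ⟨hv, hw, e, hre, he⟩ := h
  have h0 : (NB σ).mkQ (g0 σ e) = 0 := by
    rw [Submodule.mkQ_apply, Submodule.Quotient.mk_eq_zero]
    exact g0_mem_NB σ e hre
  rw [g0_eq σ e he, gfun, twist, if_pos ⟨hv, hw⟩, map_add, map_add, map_smul, add_smul] at h0
  have h1 : (NB σ).mkQ (indW σ (some (xmap σ w))) + nrv σ w • (NB σ).mkQ (indW σ none)
      = -((NB σ).mkQ (indW σ (some (xmap σ v))) + nrv σ v • (NB σ).mkQ (indW σ none)) := by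
    refine eq_neg_of_add_eq_zero_left ?_
    rw [← h0]; abel
  rw [h1, neg_self]

lemma mkW_span (hG : G.Connected) (v₀ : G.V) (v : G.V) :
    (NB σ).mkQ (indW σ (some (xmap σ v)))
      ∈ span (ZMod 2) ({(NB σ).mkQ (indW σ (some (xmap σ v₀))),
          (NB σ).mkQ (indW σ none)} : Set _) := by
  have hwalk := hG.2 v₀ v
  induction hwalk with
  | refl => exact subset_span (by simp)
  | tail _ hbc ih =>
      obtain ⟨t, ht⟩ := step_all σ _ _ hbc
      rw [ht]
      exact add_mem ih (smul_mem _ _ (subset_span (by simp)))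

lemma xmap_surj (y : VHt σ) : ∃ v : G.V, xmap σ v = y := by
  rcases y with c | p
  · obtain ⟨u, hu⟩ := Quotient.exists_rep c
    refine ⟨u.1, ?_⟩
    rw [xmap, dif_pos u.2]
    exact congrArg Sum.inl ((congrArg (mkC σ) (Subtype.ext rfl)).trans hu)
  · obtain ⟨u, hu⟩ := Quotient.exists_rep p
    refine ⟨u.1, ?_⟩
    rw [xmap, dif_neg u.2]
    exact congrArg Sum.inr ((congrArg (mkP σ) (Subtype.ext rfl)).trans hu)

lemma span_indW (hG : G.Connected) (v₀ : G.V)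
    (s : Set ((WHt σ → ZMod 2) ⧸ NB σ))
    (h0 : (NB σ).mkQ (indW σ (some (xmap σ v₀))) ∈ span (ZMod 2) s)
    (hn : (NB σ).mkQ (indW σ none) ∈ span (ZMod 2) s)
    (x : (WHt σ → ZMod 2) ⧸ NB σ) : x ∈ span (ZMod 2) s := by
  obtain ⟨m, rfl⟩ := Submodule.Quotient.mk_surjective (NB σ) x
  have hm : (Submodule.Quotient.mk m : (WHt σ → ZMod 2) ⧸ NB σ)
      = (NB σ).mkQ (∑ w, m w • indW σ w) := by
    rw [Submodule.mkQ_apply]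
    exact congrArg _ (indW_sum σ m)
  rw [hm, map_sum]
  refine sum_mem (fun w _ => ?_)
  rw [map_smul]
  refine smul_mem _ _ ?_
  rcases w with _ | y
  · exact hn
  · obtain ⟨v, rfl⟩ := xmap_surj σ y
    have := mkW_span σ hG v₀ v
    refine span_le.mpr ?_ this
    rintro z (rfl | rfl)
    · exact h0
    · exact hn

lemma chi_none_zero (ha : aProp σ) : (NB σ).mkQ (indW σ none) = 0 := by
  obtain ⟨v, hv, hwalk⟩ := ha
  have key : ∀ w : G.V, Relation.ReflTransGen (nonRealAdj σ) v w →
      (NB σ).mkQ (indW σ (some (xmap σ w))) + nrv σ w • (NB σ).mkQ (indW σ none)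
        = (NB σ).mkQ (indW σ (some (xmap σ v))) + nrv σ v • (NB σ).mkQ (indW σ none) := by
    intro w hw
    induction hw with
    | refl => rfl
    | tail _ hbc ih => rw [step_nr σ _ _ hbc, ih]
  have h1 := key (σ.ιV v) hwalk
  rw [xmap_iV, nrv_iV σ v hv, add_smul, one_smul, ← add_assoc] at h1
  have h2 := add_right_cancel h1
  nth_rewrite 2 [← add_zero ((NB σ).mkQ (indW σ (some (xmap σ v))))] at h2
  exact add_left_cancel h2

lemma cardB (hG : G.Connected) :
    Nat.card (CompR σ) + Nat.card (PV σ) + 1 ≤ Nat.card (PE σ) + 2 := by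
  classical
  obtain ⟨⟨v₀⟩, -⟩ := id hG
  haveI : Module.Finite (ZMod 2) (WHt σ → ZMod 2) := Module.Finite.pi
  have h := myRankLe (NB σ) (genB σ) rfl
      (fun b : Bool => if b then (NB σ).mkQ (indW σ none)
        else (NB σ).mkQ (indW σ (some (xmap σ v₀))))
      (by
        intro x
        refine span_indW σ hG v₀ _ ?_ ?_ x
        · exact subset_span ⟨false, by simp⟩
        · exact subset_span ⟨true, by simp⟩)
  rw [Module.finrank_pi] at h
  have hcard : Fintype.card (WHt σ) = Fintype.card (CompR σ) + Fintype.card (PV σ) + 1 := by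
    rw [Fintype.card_option, Fintype.card_sum]
  rw [hcard, Fintype.card_bool] at h
  simpa [Nat.card_eq_fintype_card] using h

lemma cardB' (hG : G.Connected) (ha : aProp σ) :
    Nat.card (CompR σ) + Nat.card (PV σ) + 1 ≤ Nat.card (PE σ) + 1 := by
  classical
  obtain ⟨⟨v₀⟩, -⟩ := id hG
  haveI : Module.Finite (ZMod 2) (WHt σ → ZMod 2) := Module.Finite.pi
  have hz := chi_none_zero σ ha
  have h := myRankLe (NB σ) (genB σ) rfl
      (fun _ : Unit => (NB σ).mkQ (indW σ (some (xmap σ v₀))))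
      (by
        intro x
        refine span_indW σ hG v₀ _ ?_ ?_ x
        · exact subset_span ⟨(), rfl⟩
        · rw [hz]; exact zero_mem _)
  rw [Module.finrank_pi] at h
  have hcard : Fintype.card (WHt σ) = Fintype.card (CompR σ) + Fintype.card (PV σ) + 1 := by
    rw [Fintype.card_option, Fintype.card_sum]
  rw [hcard, Fintype.card_unit] at h
  simpa [Nat.card_eq_fintype_card] using h

/-! #### The real locus inequality -/

noncomputable def indA (w : RV σ) : RV σ → ZMod 2 := fun x => if w.1 = x.1 then 1 else 0

lemma indA_sum (m : RV σ → ZMod 2) : m = ∑ w, m w • indA σ w := by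
  classical
  funext x
  rw [Finset.sum_apply]
  rw [Finset.sum_eq_single x]
  · show m x = m x • indA σ x x
    rw [indA, if_pos rfl, smul_eq_mul, mul_one]
  · intro w _ hw
    show m w • indA σ w x = 0
    rw [indA, if_neg (fun hh => hw (Subtype.ext hh)), smul_eq_mul, mul_zero]
  · intro hx
    exact absurd (Finset.mem_univ x) hx

noncomputable def bA : {e : G.E // NonIsolatedRealE σ e} → (RV σ → ZMod 2) := fun e u =>
  Sym2.lift ⟨fun a b => ((if a = u.1 then 1 else 0) + (if b = u.1 then 1 else 0) : ZMod 2),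
    fun a b => add_comm _ _⟩ (G.ψ e.1)

noncomputable def NA : Submodule (ZMod 2) (RV σ → ZMod 2) :=
  span (ZMod 2) (Set.range (bA σ))

lemma bA_eq (e : G.E) (he : NonIsolatedRealE σ e) {a b : RV σ}
    (h : G.ψ e = s(a.1, b.1)) : bA σ ⟨e, he⟩ = indA σ a + indA σ b := by
  funext u
  show Sym2.lift _ (G.ψ e) = _
  rw [h, Sym2.lift_mk]
  rfl

lemma mkQ_indA_adj (v w : RV σ) (h : adjR σ v w) :
    (NA σ).mkQ (indA σ v) = (NA σ).mkQ (indA σ w) := by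
  obtain ⟨e, hni, he⟩ := h
  rw [Submodule.mkQ_apply, Submodule.mkQ_apply, Submodule.Quotient.eq, char2_sub,
    ← bA_eq σ e hni he]
  exact subset_span ⟨⟨e, hni⟩, rfl⟩

lemma mkQ_indA_eqv (v w : RV σ) (h : Relation.EqvGen (adjR σ) v w) :
    (NA σ).mkQ (indA σ v) = (NA σ).mkQ (indA σ w) := by
  induction h with
  | rel a b hab => exact mkQ_indA_adj σ a b hab
  | refl a => rfl
  | symm a b _ ih => exact ih.symm
  | trans a b c _ _ ih1 ih2 => exact ih1.trans ih2

lemma indA_class (v : RV σ) :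
    (NA σ).mkQ (indA σ v) = (NA σ).mkQ (indA σ (mkC σ v).out) := by
  refine mkQ_indA_eqv σ v (mkC σ v).out ?_
  have hrel := Quotient.exact ((Quotient.out_eq (mkC σ v)).trans rfl)
  exact Relation.EqvGen.symm _ _ hrel

lemma cardA : Nat.card (RV σ) ≤
    Nat.card {e : G.E // NonIsolatedRealE σ e} + Nat.card (CompR σ) := by
  classical
  haveI : Module.Finite (ZMod 2) (RV σ → ZMod 2) := Module.Finite.pi
  have h := myRankLe (NA σ) (bA σ) rfl
      (fun c : CompR σ => (NA σ).mkQ (indA σ c.out))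
      (by
        intro x
        obtain ⟨m, rfl⟩ := Submodule.Quotient.mk_surjective (NA σ) x
        have hm : (Submodule.Quotient.mk m : (RV σ → ZMod 2) ⧸ NA σ)
            = (NA σ).mkQ (∑ w, m w • indA σ w) := by
          rw [Submodule.mkQ_apply]
          exact congrArg _ (indA_sum σ m)
        rw [hm, map_sum]
        refine sum_mem (fun w _ => ?_)
        rw [map_smul]
        refine smul_mem _ _ ?_
        rw [indA_class σ w]
        exact subset_span ⟨mkC σ w, rfl⟩)
  rw [Module.finrank_pi] at h
  simpa [Nat.card_eq_fintype_card] using h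

/-! #### Counting lemmas -/

lemma genus_eq (hG : G.Connected) :
    G.genus = 1 + (Fintype.card G.E : ℤ) - Fintype.card G.V := by
  have h1 : G.numComponents = 1 := by
    rw [numComponents, Nat.card_eq_one_iff_unique]
    constructor
    · constructor
      intro a b
      obtain ⟨x, rfl⟩ := Quotient.exists_rep a
      obtain ⟨y, rfl⟩ := Quotient.exists_rep b
      exact Quotient.sound (rtg_to_eqvgen (hG.2 x y))
    · exact ⟨Quotient.mk _ hG.1.some⟩
  rw [genus, h1]
  push_cast
  ring

lemma cardV_split :
    (Fintype.card G.V : ℤ) = Nat.card (RV σ) + 2 * Nat.card (PV σ) := by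
  classical
  have h1 : Fintype.card G.V = Fintype.card (RV σ) + Fintype.card (NVert σ) := by
    rw [← Fintype.card_sum]
    exact (Fintype.card_congr (Equiv.sumCompl (RealV σ))).symm
  have h2 : Nat.card (NVert σ) = 2 * Nat.card (PV σ) :=
    card_pair_quot (jV σ) (jV_invol σ) (jV_free σ)
  rw [h1]
  rw [← Nat.card_eq_fintype_card (α := NVert σ), h2]
  push_cast [Nat.card_eq_fintype_card]
  ring

lemma cardE_split :
    (Fintype.card G.E : ℤ) = Nat.card {e : G.E // IsolatedRealE σ e}
      + Nat.card {e : G.E // NonIsolatedRealE σ e} + 2 * Nat.card (PE σ) := by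
  classical
  have h1 : Nat.card G.E = Nat.card {e : G.E // RealE σ e} + Nat.card (NEdge σ) := by
    rw [Nat.card_eq_fintype_card, Nat.card_eq_fintype_card, Nat.card_eq_fintype_card,
      ← Fintype.card_sum]
    exact (Fintype.card_congr (Equiv.sumCompl (RealE σ))).symm
  have h2 : Nat.card (NEdge σ) = 2 * Nat.card (PE σ) :=
    card_pair_quot (jE σ) (jE_invol σ) (jE_free σ)
  have h3 : Nat.card {e : G.E // RealE σ e}
      = Nat.card {e : G.E // IsolatedRealE σ e}
        + Nat.card {e : G.E // NonIsolatedRealE σ e} := by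
    have e1 : {e : G.E // IsolatedRealE σ e}
        ≃ {x : {e : G.E // RealE σ e} // ∃ v ∈ G.ψ x.1, ¬ RealV σ v} :=
      (Equiv.subtypeSubtypeEquivSubtypeInter (RealE σ)
        (fun e => ∃ v ∈ G.ψ e, ¬ RealV σ v)).symm
    have e2 : {e : G.E // NonIsolatedRealE σ e}
        ≃ {x : {e : G.E // RealE σ e} // ¬ ∃ v ∈ G.ψ x.1, ¬ RealV σ v} := by
      refine Equiv.trans ?_ (Equiv.subtypeSubtypeEquivSubtypeInter (RealE σ)
        (fun e => ¬ ∃ v ∈ G.ψ e, ¬ RealV σ v)).symm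
      refine Equiv.subtypeEquivRight (fun e => ?_)
      constructor
      · rintro ⟨hre, hall⟩
        exact ⟨hre, by push_neg; exact hall⟩
      · rintro ⟨hre, hnex⟩
        push_neg at hnex
        exact ⟨hre, hnex⟩
    rw [Nat.card_congr e1, Nat.card_congr e2, Nat.card_eq_fintype_card,
      Nat.card_eq_fintype_card, Nat.card_eq_fintype_card, ← Fintype.card_sum]
    exact (Fintype.card_congr (Equiv.sumCompl _)).symm
  rw [← Nat.card_eq_fintype_card, h1, h2, h3]
  push_cast
  ring

lemma mkC_mem_eq (e : G.E) (he : NonIsolatedRealE σ e) (v w : RV σ)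
    (hv : v.1 ∈ G.ψ e) (hw : w.1 ∈ G.ψ e) : mkC σ v = mkC σ w := by
  obtain ⟨a, b, hab⟩ : ∃ a b, G.ψ e = s(a, b) := ⟨_, _, (Quot.out_eq (G.ψ e)).symm⟩
  have ha : RealV σ a := he.2 a (by rw [hab]; exact Sym2.mem_mk_left a b)
  have hb : RealV σ b := he.2 b (by rw [hab]; exact Sym2.mem_mk_right a b)
  have hm : mkC σ ⟨a, ha⟩ = mkC σ ⟨b, hb⟩ :=
    Quotient.sound (Relation.EqvGen.rel _ _ ⟨e, he, hab⟩)
  have hv' : mkC σ v = mkC σ ⟨a, ha⟩ := by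
    rw [hab, Sym2.mem_iff] at hv
    rcases hv with h | h
    · exact congrArg (mkC σ) (Subtype.ext h)
    · rw [congrArg (mkC σ) (Subtype.ext h : v = ⟨b, hb⟩), hm]
  have hw' : mkC σ w = mkC σ ⟨a, ha⟩ := by
    rw [hab, Sym2.mem_iff] at hw
    rcases hw with h | h
    · exact congrArg (mkC σ) (Subtype.ext h)
    · rw [congrArg (mkC σ) (Subtype.ext h : w = ⟨b, hb⟩), hm]
  rw [hv', hw']

lemma sNum_eq : sNum σ = (Nat.card {e : G.E // IsolatedRealE σ e} : ℤ)
    + 2 * Nat.card (CompR σ) + Nat.card {e : G.E // NonIsolatedRealE σ e}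
    - Nat.card (RV σ) := by
  classical
  rw [sNum, finsum_eq_sum_of_fintype]
  have hterm : ∀ c : CompR σ, compGenus σ c + 1
      = 2 + (Nat.card {e : G.E // NonIsolatedRealE σ e ∧
          ∃ v : RV σ, v.1 ∈ G.ψ e ∧ Quotient.mk (Relation.EqvGen.setoid (adjR σ)) v = c} : ℤ)
        - (Nat.card {v : RV σ // Quotient.mk (Relation.EqvGen.setoid (adjR σ)) v = c} : ℤ) := by
    intro c
    rw [compGenus]
    ring
  rw [Finset.sum_congr rfl (fun c _ => hterm c)]
  rw [Finset.sum_sub_distrib, Finset.sum_add_distrib]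
  have hV : ∑ c : CompR σ,
      (Nat.card {v : RV σ // Quotient.mk (Relation.EqvGen.setoid (adjR σ)) v = c} : ℤ)
      = (Nat.card (RV σ) : ℤ) := by
    rw [← Nat.cast_sum]
    exact_mod_cast congrArg (Nat.cast (R := ℤ))
      (@sum_card_fibers (RV σ) _ (CompR σ) (instFC σ)
        (fun v : RV σ => Quotient.mk (Relation.EqvGen.setoid (adjR σ)) v))
  have hE : ∑ c : CompR σ,
      (Nat.card {e : G.E // NonIsolatedRealE σ e ∧
        ∃ v : RV σ, v.1 ∈ G.ψ e ∧ Quotient.mk (Relation.EqvGen.setoid (adjR σ)) v = c} : ℤ)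
      = (Nat.card {e : G.E // NonIsolatedRealE σ e} : ℤ) := by
    rw [← Nat.cast_sum]
    congr 1
    set F : {e : G.E // NonIsolatedRealE σ e} → CompR σ :=
      fun x => mkC σ ⟨(Quot.out (G.ψ x.1)).1, x.2.2 _ (Sym2.out_fst_mem _)⟩ with hF
    have hiff : ∀ (c : CompR σ) (x : {e : G.E // NonIsolatedRealE σ e}),
        (∃ v : RV σ, v.1 ∈ G.ψ x.1 ∧ Quotient.mk (Relation.EqvGen.setoid (adjR σ)) v = c)
          ↔ F x = c := by
      intro c x
      constructor
      · rintro ⟨v, hmem, hcl⟩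
        have := mkC_mem_eq σ x.1 x.2 ⟨(Quot.out (G.ψ x.1)).1, x.2.2 _ (Sym2.out_fst_mem _)⟩ v
          (Sym2.out_fst_mem _) hmem
        exact this.trans hcl
      · rintro rfl
        exact ⟨⟨(Quot.out (G.ψ x.1)).1, x.2.2 _ (Sym2.out_fst_mem _)⟩,
          Sym2.out_fst_mem _, rfl⟩
    have hcongr : ∀ c : CompR σ,
        Nat.card {e : G.E // NonIsolatedRealE σ e ∧
          ∃ v : RV σ, v.1 ∈ G.ψ e ∧ Quotient.mk (Relation.EqvGen.setoid (adjR σ)) v = c}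
        = Nat.card {x : {e : G.E // NonIsolatedRealE σ e} // F x = c} := by
      intro c
      refine Nat.card_congr ?_
      refine Equiv.trans (Equiv.subtypeSubtypeEquivSubtypeInter (NonIsolatedRealE σ)
        (fun e => ∃ v : RV σ, v.1 ∈ G.ψ e ∧
          Quotient.mk (Relation.EqvGen.setoid (adjR σ)) v = c)).symm ?_
      exact Equiv.subtypeEquivRight (fun x => hiff c x)
    rw [Finset.sum_congr rfl (fun c _ => hcongr c)]
    exact @sum_card_fibers _ _ (CompR σ) (instFC σ) F
  rw [hV, hE, Finset.sum_const, Finset.card_univ, ← Nat.card_eq_fintype_card]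
  push_cast
  ring

end Main

open FinGraph in
/-- For a connected finite graph `G` with a real structure:
`s(G) ≡ g(G) + 1 (mod 2)`, `0 ≤ s(G) ≤ g(G) + 1`, `s(G) ≠ g(G) + 1` if
`a(G) = 1`, and `s(G) ≠ 0` if `a(G) = 0`. -/
theorem sNum_constraints (G : FinGraph) (σ : RealStructure G) (hG : G.Connected) :
    sNum σ ≡ G.genus + 1 [ZMOD 2] ∧
    0 ≤ sNum σ ∧ sNum σ ≤ G.genus + 1 ∧
    (aProp σ → sNum σ ≠ G.genus + 1) ∧
    (¬ aProp σ → sNum σ ≠ 0) := by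
  classical
  have hs := sNum_eq σ
  have hg := genus_eq hG
  have hV := cardV_split σ
  have hE := cardE_split σ
  have hA := cardA σ
  have hB := cardB σ hG
  refine ⟨?_, ?_, ?_, ?_, ?_⟩
  · rw [Int.modEq_iff_dvd]
    omega
  · omega
  · omega
  · intro ha
    have hB' := cardB' σ hG ha
    omega
  · intro hna h0
    have h1 : Nat.card {e : G.E // IsolatedRealE σ e} = 0 := by omega
    have h2 : Nat.card (CompR σ) = 0 := by omega
    rw [Nat.card_eq_fintype_card] at h1 h2
    have hcE : IsEmpty (CompR σ) := Fintype.card_eq_zero_iff.mp h2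
    have hiE : IsEmpty {e : G.E // IsolatedRealE σ e} := Fintype.card_eq_zero_iff.mp h1
    have hnoreal : ∀ v : G.V, ¬ RealV σ v := fun v hv => hcE.false (mkC σ ⟨v, hv⟩)
    have hnorealE : ∀ e : G.E, ¬ RealE σ e := fun e he =>
      hiE.false ⟨e, he, (Quot.out (G.ψ e)).1, Sym2.out_fst_mem _, hnoreal _⟩
    refine hna ⟨hG.1.some, hnoreal _, ?_⟩
    refine Relation.ReflTransGen.mono ?_ _ _ (hG.2 _ _)
    intro a b hab
    obtain ⟨e, hψ⟩ := hab
    exact ⟨hnoreal a, hnoreal b, e, hnorealE e, hψ⟩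
end

section
/- Let g, s be nonnegative integers and a ∈ {0, 1} with s ≤ g + 1, s ≡ g + 1 (mod 2), a = 0 if s = g + 1, and a = 1 if s = 0. Then there exists a connected finite graph G with a real structure such that g(G) = g, s(G) = s, and a(G) = a. -/
namespace RealProof
open FinGraph

lemma rtg_eqvGen {α : Type*} {r : α → α → Prop} {a b : α}
    (h : Relation.ReflTransGen r a b) : Relation.EqvGen r a b := by
  induction h with
  | refl => exact Relation.EqvGen.refl a
  | tail _ hstep ih => exact Relation.EqvGen.trans _ _ _ ih (Relation.EqvGen.rel _ _ hstep)

lemma eqvGen_eq {α : Type*} {r : α → α → Prop} (hr : ∀ x y, ¬ r x y) {a b : α}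
    (h : Relation.EqvGen r a b) : a = b := by
  induction h with
  | rel x y hxy => exact absurd hxy (hr x y)
  | refl => rfl
  | symm x y _ ih => exact ih.symm
  | trans x y z _ _ ih1 ih2 => exact ih1.trans ih2

lemma numComponents_eq_one (G : FinGraph) (h : G.Connected) : G.numComponents = 1 := by
  obtain ⟨⟨v⟩, hc⟩ := h
  rw [FinGraph.numComponents, Nat.card_eq_one_iff_unique]
  refine ⟨⟨fun x y => ?_⟩, ⟨Quotient.mk _ v⟩⟩
  obtain ⟨x, rfl⟩ := Quotient.exists_rep x
  obtain ⟨y, rfl⟩ := Quotient.exists_rep y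
  exact Quotient.sound (rtg_eqvGen (hc x y))

lemma sNum_no_real_edges {G : FinGraph} (σ : RealStructure G)
    (h : ∀ e : G.E, ¬ RealE σ e) : sNum σ = (Nat.card (RV σ) : ℤ) := by
  have hiso : IsEmpty {e : G.E // IsolatedRealE σ e} := ⟨fun e => h e.1 e.2.1⟩
  have hadj : ∀ v w : RV σ, ¬ adjR σ v w := by
    rintro v w ⟨e, he, -⟩; exact h e he.1
  have key : ∀ v w : RV σ, Quotient.mk (Relation.EqvGen.setoid (adjR σ)) v =
      Quotient.mk (Relation.EqvGen.setoid (adjR σ)) w → v = w :=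
    fun v w hvw => eqvGen_eq (fun x y => hadj x y) (Quotient.exact hvw)
  have hsurj : ∀ c : CompR σ, ∃ v : RV σ,
      Quotient.mk (Relation.EqvGen.setoid (adjR σ)) v = c :=
    fun c => Quotient.exists_rep c
  have hfinRV : Finite (RV σ) := Subtype.finite
  have hfinC : Finite (CompR σ) := Quotient.finite _
  have hcomp : ∀ c : CompR σ, compGenus σ c = 0 := by
    intro c
    have h1 : IsEmpty {e : G.E // NonIsolatedRealE σ e ∧
        ∃ v : RV σ, v.1 ∈ G.ψ e ∧ Quotient.mk (Relation.EqvGen.setoid (adjR σ)) v = c} :=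
      ⟨fun e => h e.1 e.2.1.1⟩
    have h2 : Nat.card {v : RV σ // Quotient.mk (Relation.EqvGen.setoid (adjR σ)) v = c} = 1 := by
      rw [Nat.card_eq_one_iff_unique]
      refine ⟨⟨fun x y => Subtype.ext (key _ _ (x.2.trans y.2.symm))⟩, ?_⟩
      obtain ⟨v, hv⟩ := hsurj c
      exact ⟨⟨v, hv⟩⟩
    rw [compGenus, h2, Nat.card_of_isEmpty]
    simp
  have hcard : Nat.card (RV σ) = Nat.card (CompR σ) :=
    Nat.card_eq_of_bijective _ ⟨fun v w => key v w, hsurj⟩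
  have := Fintype.ofFinite (CompR σ)
  have hsum : ∑ᶠ c : CompR σ, (compGenus σ c + 1) = ∑ᶠ _c : CompR σ, (1 : ℤ) :=
    finsum_congr (fun c => by rw [hcomp c]; ring)
  rw [sNum, hsum, finsum_eq_sum_of_fintype, Nat.card_of_isEmpty, hcard]
  simp [Nat.card_eq_fintype_card]

/-- The swap involution on `Fin 2`. -/
def sw : Fin 2 → Fin 2 := fun j => j + 1

lemma sw_sw : ∀ j : Fin 2, sw (sw j) = j := by decide
lemma sw_ne : ∀ j : Fin 2, sw j ≠ j := by decide
lemma sw_zero : sw 0 = 1 := by decide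

/-- The graph realizing the invariants. -/
def Gmk (m k a : ℕ) : FinGraph where
  V := Fin m ⊕ Fin 2
  E := (Fin m × Fin 2) ⊕ (Fin k × Fin 2)
  ψ := fun e => match e with
    | .inl (i, j) => s(Sum.inl i, Sum.inr j)
    | .inr (_, j) => if a = 1 then s(Sum.inr 0, Sum.inr 1) else s(Sum.inr j, Sum.inr j)

@[simp] lemma ψ_inl (m k a : ℕ) (i : Fin m) (j : Fin 2) :
    (Gmk m k a).ψ (Sum.inl (i, j)) = s(Sum.inl i, Sum.inr j) := rfl

@[simp] lemma ψ_inr (m k a : ℕ) (i : Fin k) (j : Fin 2) :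
    (Gmk m k a).ψ (Sum.inr (i, j)) =
      if a = 1 then s(Sum.inr 0, Sum.inr 1) else s(Sum.inr j, Sum.inr j) := rfl

/-- The real structure on `Gmk`. -/
def σmk (m k a : ℕ) : RealStructure (Gmk m k a) where
  ιV := Sum.map id sw
  ιE := Sum.map (Prod.map id sw) (Prod.map id sw)
  ιV_invol := by rintro (i | j) <;> simp [sw_sw] <;> rfl
  ιE_invol := by rintro (⟨i, j⟩ | ⟨i, j⟩) <;> simp [sw_sw] <;> rfl
  compat := by
    rintro (⟨i, j⟩ | ⟨i, j⟩)
    · simp [Sym2.map_pair_eq]; rfl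
    · by_cases ha : a = 1 <;>
        simp [ha, Sym2.map_pair_eq, sw_zero, sw, Sym2.eq_swap]
      · exact Sym2.eq_swap
      · rfl

@[simp] lemma ιV_inl (m k a : ℕ) (i : Fin m) :
    (σmk m k a).ιV (Sum.inl i) = Sum.inl i := rfl

@[simp] lemma ιV_inr (m k a : ℕ) (j : Fin 2) :
    (σmk m k a).ιV (Sum.inr j) = Sum.inr (sw j) := rfl

@[simp] lemma ιE_inl (m k a : ℕ) (i : Fin m) (j : Fin 2) :
    (σmk m k a).ιE (Sum.inl (i, j)) = Sum.inl (i, sw j) := rfl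

@[simp] lemma ιE_inr (m k a : ℕ) (i : Fin k) (j : Fin 2) :
    (σmk m k a).ιE (Sum.inr (i, j)) = Sum.inr (i, sw j) := rfl

lemma no_realE (m k a : ℕ) : ∀ e : (Gmk m k a).E, ¬ RealE (σmk m k a) e := by
  rintro (⟨i, j⟩ | ⟨i, j⟩) h <;>
  · unfold RealE at h
    injection h with h
    injection h with h1 h2
    exact sw_ne j h2

lemma realV_inl (m k a : ℕ) (i : Fin m) : RealV (σmk m k a) (Sum.inl i) := rfl

lemma not_realV_inr (m k a : ℕ) (j : Fin 2) : ¬ RealV (σmk m k a) (Sum.inr j) := by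
  intro h
  unfold RealV at h
  rw [ιV_inr] at h
  injection h with h
  exact sw_ne j h

lemma card_RV (m k a : ℕ) : Nat.card (RV (σmk m k a)) = m := by
  have hb : Function.Bijective
      (fun i : Fin m => (⟨Sum.inl i, realV_inl m k a i⟩ : RV (σmk m k a))) := by
    constructor
    · intro i j hij
      have h := congrArg Subtype.val hij
      injection h with h
    · rintro ⟨(i | j), hv⟩
      · exact ⟨i, rfl⟩
      · exact absurd hv (not_realV_inr m k a j)
  have h3 : Nat.card (RV (σmk m k a)) = Nat.card (Fin m) :=
    (Nat.card_eq_of_bijective _ hb).symm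
  rw [h3, Nat.card_eq_fintype_card, Fintype.card_fin]

lemma connected_Gmk (m k a : ℕ) (h1 : a = 1 → 1 ≤ k) (h2 : a ≠ 1 → 1 ≤ m) :
    (Gmk m k a).Connected := by
  refine ⟨⟨Sum.inr 0⟩, ?_⟩
  have hsym : Symmetric (Gmk m k a).Adj := by
    rintro x y ⟨e, he⟩; exact ⟨e, he.trans (Sym2.eq_swap)⟩
  have hub : ∀ v : (Gmk m k a).V,
      Relation.ReflTransGen (Gmk m k a).Adj (Sum.inr 0) v := by
    rintro (i | j)
    · exact Relation.ReflTransGen.single ⟨Sum.inl (i, 0), Sym2.eq_swap⟩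
    · fin_cases j
      · exact Relation.ReflTransGen.refl
      · by_cases ha : a = 1
        · refine Relation.ReflTransGen.single ⟨Sum.inr (⟨0, h1 ha⟩, 0), ?_⟩
          rw [ψ_inr, if_pos ha]
          rfl
        · refine Relation.ReflTransGen.head
            ⟨Sum.inl (⟨0, h2 ha⟩, 0), Sym2.eq_swap⟩
            (Relation.ReflTransGen.single ⟨Sum.inl (⟨0, h2 ha⟩, 1), rfl⟩)
  intro v w
  exact (@Std.Symm.symm _ _ (@Relation.ReflTransGen.stdSymm _ _ ⟨fun _ _ h => hsym h⟩) _ _ (hub v)).trans (hub w)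

lemma genus_Gmk (m k a : ℕ) (h1 : a = 1 → 1 ≤ k) (h2 : a ≠ 1 → 1 ≤ m) :
    (Gmk m k a).genus = (m : ℤ) + 2 * k - 1 := by
  rw [FinGraph.genus, numComponents_eq_one _ (connected_Gmk m k a h1 h2)]
  have hV : Fintype.card (Gmk m k a).V = m + 2 := by
    rw [← Nat.card_eq_fintype_card]; simp [Gmk]
  have hE : Fintype.card (Gmk m k a).E = m * 2 + k * 2 := by
    rw [← Nat.card_eq_fintype_card]; simp [Gmk]
  rw [hV, hE]
  push_cast
  ring

lemma sNum_Gmk (m k a : ℕ) : sNum (σmk m k a) = (m : ℤ) := by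
  rw [sNum_no_real_edges _ (no_realE m k a), card_RV]

lemma aProp_one (m k : ℕ) (hk : 1 ≤ k) : aProp (σmk m k 1) := by
  refine ⟨Sum.inr 0, not_realV_inr m k 1 0, Relation.ReflTransGen.single ?_⟩
  refine ⟨not_realV_inr m k 1 0, ?_, Sum.inr (⟨0, hk⟩, 0), no_realE m k 1 _, ?_⟩
  · rw [ιV_inr, sw_zero]; exact not_realV_inr m k 1 1
  · rw [ψ_inr, if_pos rfl, ιV_inr, sw_zero]
    rfl

lemma aProp_not (m k a : ℕ) (ha : a ≠ 1) : ¬ aProp (σmk m k a) := by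
  rintro ⟨v, hv, hwalk⟩
  have step : ∀ x y, nonRealAdj (σmk m k a) x y → x = y := by
    rintro (i | jx) y ⟨hx, hy, e, he, hψ⟩
    · exact absurd (realV_inl m k a i) hx
    · rcases y with i | jy
      · exact absurd (realV_inl m k a i) hy
      · rcases e with ⟨i, j⟩ | ⟨i, j⟩
        · rw [ψ_inl] at hψ; replace hψ := Sym2.eq_iff.mp hψ
          simp at hψ
        · rw [ψ_inr, if_neg ha] at hψ; replace hψ := Sym2.eq_iff.mp hψ
          simp only [Sum.inr.injEq] at hψ
          rcases hψ with ⟨h1, h2⟩ | ⟨h1, h2⟩ <;> rw [← h1, ← h2]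
  have keyw : ∀ x y, Relation.ReflTransGen (nonRealAdj (σmk m k a)) x y → x = y := by
    intro x y hxy
    induction hxy with
    | refl => rfl
    | tail _ h ih => exact ih.trans (step _ _ h)
  exact hv (keyw _ _ hwalk).symm

lemma aNum_one (m k : ℕ) (hk : 1 ≤ k) : aNum (σmk m k 1) = 1 := by
  rw [aNum, if_pos (aProp_one m k hk)]

lemma aNum_zero (m k a : ℕ) (ha : a ≠ 1) : aNum (σmk m k a) = 0 := by
  rw [aNum, if_neg (aProp_not m k a ha)]

end RealProof

open FinGraph in
/-- All invariants `(g, s, a)` allowed by Theorem 1 are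
realized by some connected finite graph with a real structure. -/
theorem exists_realGraph_with_invariants (g s a : ℕ) (ha : a = 0 ∨ a = 1)
    (hs : s ≤ g + 1) (hpar : s ≡ g + 1 [MOD 2])
    (hM : s = g + 1 → a = 0) (h0 : s = 0 → a = 1) :
    ∃ (G : FinGraph) (σ : RealStructure G),
      G.Connected ∧ G.genus = (g : ℤ) ∧ sNum σ = (s : ℤ) ∧ aNum σ = a := by
  classical
  have hp : s % 2 = (g + 1) % 2 := hpar
  set k := (g + 1 - s) / 2 with hkdef
  have h2k : s + 2 * k = g + 1 := by omega
  have h1 : a = 1 → 1 ≤ k := by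
    intro ha1
    rcases Nat.eq_zero_or_pos k with hk0 | hk1
    · have := hM (by omega); omega
    · exact hk1
  have h2 : a ≠ 1 → 1 ≤ s := by
    intro ha0
    rcases Nat.eq_zero_or_pos s with hs0 | hs1
    · have := h0 hs0; omega
    · exact hs1
  refine ⟨RealProof.Gmk s k a, RealProof.σmk s k a,
    RealProof.connected_Gmk s k a h1 h2, ?_, RealProof.sNum_Gmk s k a, ?_⟩
  · rw [RealProof.genus_Gmk s k a h1 h2]; push_cast; omega
  · rcases ha with ha | ha
    · rw [RealProof.aNum_zero s k a (by omega), ha]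
    · rw [ha, RealProof.aNum_one s k (h1 ha)]
end

section
/- There exists a connected finite graph G with a real structure and a real divisor D on G such that rk_ℝ(D) = 1 and rk(D) = 0; hence the inequality rk_ℝ(D) ≥ rk(D) can be strict. -/
section CycleExample

open FinGraph

/-- The 3-cycle graph. -/
abbrev G0 : FinGraph := { V := Fin 3, E := Fin 3, ψ := fun e => s(e, e + 1) }

/-- Reflection real structure on the 3-cycle. -/
def σ0 : RealStructure G0 where
  ιV v := -v
  ιE e := -e - 1
  ιV_invol v := by fin_cases v <;> rfl
  ιE_invol e := by fin_cases e <;> rfl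
  compat e := by
    show s(-e - 1, -e - 1 + 1) = Sym2.map (fun v => -v) s(e, e + 1)
    rw [Sym2.map_pair_eq]
    fin_cases e <;> first | rfl | exact Sym2.eq_swap

lemma deg_eq (D : G0.V → ℤ) : deg D = D 0 + D 1 + D 2 := by
  show ∑ v : Fin 3, D v = D 0 + D 1 + D 2
  rw [Fin.sum_univ_three]

lemma edgeLap_eq (f : G0.V → ℤ) (e v : Fin 3) :
    edgeLap G0 f e v = (if v = e then f (e+1) - f e else 0) +
      (if v = e + 1 then f e - f (e+1) else 0) := by
  have h : G0.ψ e = s(e, e+1) := rfl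
  simp only [edgeLap, h, Sym2.lift_mk]

lemma eL0 (f : G0.V → ℤ) (v : Fin 3) :
    edgeLap G0 f 0 v = (if v = 0 then f 1 - f 0 else 0) + (if v = 1 then f 0 - f 1 else 0) :=
  edgeLap_eq f 0 v

lemma eL1 (f : G0.V → ℤ) (v : Fin 3) :
    edgeLap G0 f 1 v = (if v = 1 then f 2 - f 1 else 0) + (if v = 2 then f 1 - f 2 else 0) :=
  edgeLap_eq f 1 v

lemma eL2 (f : G0.V → ℤ) (v : Fin 3) :
    edgeLap G0 f 2 v = (if v = 2 then f 0 - f 2 else 0) + (if v = 0 then f 2 - f 0 else 0) :=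
  edgeLap_eq f 2 v

lemma Lap_val (f : G0.V → ℤ) (v : Fin 3) :
    Lap G0 f v = edgeLap G0 f 0 v + edgeLap G0 f 1 v + edgeLap G0 f 2 v := by
  show ∑ e : Fin 3, edgeLap G0 f e v = _
  rw [Fin.sum_univ_three]

lemma Lap0 (f : G0.V → ℤ) : Lap G0 f 0 = (f 1 - f 0) + (f 2 - f 0) := by
  rw [Lap_val, eL0, eL1, eL2]; norm_num [show ¬((0:Fin 3)=2) by decide, show ¬((1:Fin 3)=2) by decide, show ¬((2:Fin 3)=0) by decide, show ¬((2:Fin 3)=1) by decide]; try ring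

lemma Lap1 (f : G0.V → ℤ) : Lap G0 f 1 = (f 0 - f 1) + (f 2 - f 1) := by
  rw [Lap_val, eL0, eL1, eL2]; norm_num [show ¬((0:Fin 3)=2) by decide, show ¬((1:Fin 3)=2) by decide, show ¬((2:Fin 3)=0) by decide, show ¬((2:Fin 3)=1) by decide]; try ring

lemma Lap2 (f : G0.V → ℤ) : Lap G0 f 2 = (f 1 - f 2) + (f 0 - f 2) := by
  rw [Lap_val, eL0, eL1, eL2]; norm_num [show ¬((0:Fin 3)=2) by decide, show ¬((1:Fin 3)=2) by decide, show ¬((2:Fin 3)=0) by decide, show ¬((2:Fin 3)=1) by decide]; try ring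

lemma deg_Lap (f : G0.V → ℤ) : deg (Lap G0 f) = 0 := by
  rw [deg_eq, Lap0, Lap1, Lap2]; ring

lemma deg_linEquiv {D D' : G0.V → ℤ} (h : LinEquiv G0 D D') : deg D' = deg D := by
  obtain ⟨f, rfl⟩ := h
  show ∑ v : Fin 3, (D v + Lap G0 f v) = _
  rw [Fin.sum_univ_three, Lap0, Lap1, Lap2]
  rw [deg_eq]; ring

lemma deg_nonneg {D : G0.V → ℤ} (h : Eff D) : 0 ≤ deg D := by
  rw [deg_eq]
  have := h 0; have := h 1; have := h 2; omega

lemma deg_sub (A B : G0.V → ℤ) : deg (A - B) = deg A - deg B := by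
  rw [deg_eq, deg_eq, deg_eq]; simp only [Pi.sub_apply]; ring

lemma eff_iff (X : G0.V → ℤ) : Eff X ↔ 0 ≤ X 0 ∧ 0 ≤ X 1 ∧ 0 ≤ X 2 := by
  constructor
  · exact fun h => ⟨h 0, h 1, h 2⟩
  · rintro ⟨a, b, c⟩ v
    fin_cases v
    exacts [a, b, c]

lemma real_iff (X : G0.V → ℤ) : IsRealDiv σ0 X ↔ X 2 = X 1 := by
  constructor
  · exact fun h => congrFun h 1
  · intro h
    funext v
    fin_cases v
    exacts [rfl, h, h.symm]

lemma linEquiv_refl (D : G0.V → ℤ) : LinEquiv G0 D D :=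
  ⟨fun _ => 0, by funext v; simp [Lap_val, edgeLap_eq]⟩

lemma unit0_vals : unitDiv G0 0 0 = 1 ∧ unitDiv G0 0 1 = 0 ∧ unitDiv G0 0 2 = 0 := by decide

lemma n10 : ¬((1 : Fin 3) = 0) := by decide
lemma n20 : ¬((2 : Fin 3) = 0) := by decide

lemma deg_unit0 : deg (unitDiv G0 0) = 1 := by rw [deg_eq]; decide

end CycleExample

open FinGraph in
/-- There is a connected finite graph with a real structure
and a real divisor `D` on it with `rk_ℝ(D) = 1` and `rk(D) = 0`. -/
theorem exists_realRank_gt_rank :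
    ∃ (G : FinGraph) (σ : RealStructure G) (D : G.V → ℤ),
      G.Connected ∧ IsRealDiv σ D ∧ HasRealRank σ D 1 ∧ HasRank G D 0 := by
  obtain ⟨u0, u1, u2⟩ := unit0_vals
  refine ⟨G0, σ0, unitDiv G0 0, ?_, ?_, ?_, ?_⟩
  · -- connected
    refine ⟨⟨0⟩, ?_⟩
    have h1 : ∀ v : Fin 3, Relation.ReflTransGen G0.Adj v (v + 1) :=
      fun v => Relation.ReflTransGen.single ⟨v, rfl⟩
    intro v w
    fin_cases v <;> fin_cases w <;>
      first
        | exact Relation.ReflTransGen.refl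
        | exact h1 0
        | exact h1 1
        | exact h1 2
        | exact (h1 0).trans (h1 1)
        | exact (h1 1).trans (h1 2)
        | exact (h1 2).trans (h1 0)
  · -- D is real
    exact (real_iff _).2 (u2.trans u1.symm)
  · -- real rank = 1
    constructor
    · -- RealRankGE 1
      intro E hEff hReal hdeg
      rw [eff_iff] at hEff
      rw [real_iff] at hReal
      rw [deg_eq] at hdeg
      have hE0 : E 0 = 1 := by omega
      have hE1 : E 1 = 0 := by omega
      have hE2 : E 2 = 0 := by omega
      refine ⟨unitDiv G0 0, linEquiv_refl _, ?_, (real_iff _).2 (u2.trans u1.symm), ?_⟩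
      · rw [eff_iff]; omega
      · rw [eff_iff]
        simp only [Pi.sub_apply]
        omega
    · -- upper bound 1
      intro r hr
      by_contra hlt
      push_neg at hlt
      obtain ⟨D', hlin, hEff', _, hdom⟩ :=
        hr (fun v => if v = 0 then r else 0)
          (by rw [eff_iff]; rw [if_pos rfl, if_neg n10, if_neg n20]; omega)
          ((real_iff _).2 (by show (if (2:Fin 3) = 0 then r else 0) = (if (1:Fin 3) = 0 then r else 0); rw [if_neg n10, if_neg n20]))
          (by rw [deg_eq]; rw [if_pos rfl, if_neg n10, if_neg n20]; ring)
      have h1 : deg D' = 1 := by rw [deg_linEquiv hlin, deg_unit0]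
      have h2 := deg_nonneg hdom
      rw [deg_sub, h1] at h2
      rw [deg_eq] at h2
      norm_num at h2
      omega
  · -- rank = 0
    constructor
    · -- RankGE 0
      intro E hEff hdeg
      rw [eff_iff] at hEff
      rw [deg_eq] at hdeg
      refine ⟨unitDiv G0 0, linEquiv_refl _, ?_, ?_⟩
      · rw [eff_iff]; omega
      · rw [eff_iff]
        simp only [Pi.sub_apply]
        omega
    · -- upper bound 0
      intro r hr
      by_contra hlt
      push_neg at hlt
      rcases eq_or_lt_of_le (show (1:ℤ) ≤ r from hlt) with h1 | h2
      · -- r = 1 : test against the unit divisor at vertex 1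
        obtain ⟨D', hlin, hEff', hdom⟩ :=
          hr (unitDiv G0 1)
            (by rw [eff_iff]; refine ⟨?_, ?_, ?_⟩ <;> decide)
            (by rw [deg_eq, ← h1]; decide)
        rw [eff_iff] at hEff'
        have hd : deg D' = 1 := by rw [deg_linEquiv hlin, deg_unit0]
        rw [deg_eq] at hd
        rw [eff_iff] at hdom
        simp only [Pi.sub_apply] at hdom
        have e1 : unitDiv G0 1 1 = 1 := by decide
        have e0 : unitDiv G0 1 0 = 0 := by decide
        have e2 : unitDiv G0 1 2 = 0 := by decide
        rw [e0, e1, e2] at hdom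
        -- so D' = unitDiv G0 1
        obtain ⟨f, hf⟩ := hlin
        have c1 : D' 1 = unitDiv G0 0 1 + Lap G0 f 1 := congrFun hf 1
        have c2 : D' 2 = unitDiv G0 0 2 + Lap G0 f 2 := congrFun hf 2
        rw [u1, Lap1] at c1
        rw [u2, Lap2] at c2
        omega
      · -- r ≥ 2 : degree obstruction
        obtain ⟨D', hlin, hEff', hdom⟩ :=
          hr (fun v => if v = 0 then r else 0)
            (by rw [eff_iff]; rw [if_pos rfl, if_neg n10, if_neg n20]; omega)
            (by rw [deg_eq]; rw [if_pos rfl, if_neg n10, if_neg n20]; ring)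
        have hd1 : deg D' = 1 := by rw [deg_linEquiv hlin, deg_unit0]
        have hd2 := deg_nonneg hdom
        rw [deg_sub, hd1] at hd2
        rw [deg_eq] at hd2
        norm_num at hd2
        omega
end

section
/- Let G be a connected finite graph with a real structure, let D_1 and D_2 be real divisors on G, and let f : V(G) → ℤ satisfy Δ(f) = D_1 − D_2. Then f̄ = f, i.e., f(v̄) = f(v) for every vertex v. -/
section Aux

open FinGraph

lemma edgeLap_sub_aux (G : FinGraph) (g₁ g₂ : G.V → ℤ) (e : G.E) (v : G.V) :
    edgeLap G (g₁ - g₂) e v = edgeLap G g₁ e v - edgeLap G g₂ e v := by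
  unfold edgeLap
  induction G.ψ e using Sym2.ind with
  | _ a b =>
    simp only [Sym2.lift_mk, Pi.sub_apply]
    split_ifs <;> ring

lemma edgeLap_conj_aux (G : FinGraph) (σ : RealStructure G) (f : G.V → ℤ) (e : G.E) (v : G.V) :
    edgeLap G (fun x => f (σ.ιV x)) e v = edgeLap G f (σ.ιE e) (σ.ιV v) := by
  have hinj : Function.Injective σ.ιV :=
    Function.LeftInverse.injective σ.ιV_invol
  unfold edgeLap
  rw [σ.compat]
  induction G.ψ e using Sym2.ind with
  | _ a b =>
    simp [Sym2.map_pair_eq, Sym2.lift_mk, hinj.eq_iff]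

lemma Lap_conj_aux (G : FinGraph) (σ : RealStructure G) (f : G.V → ℤ) (v : G.V) :
    Lap G (fun x => f (σ.ιV x)) v = Lap G f (σ.ιV v) := by
  unfold Lap
  simp_rw [edgeLap_conj_aux]
  exact Fintype.sum_equiv (Function.Involutive.toPerm σ.ιE σ.ιE_invol) _ _ (fun e => rfl)

lemma edgeLap_nonpos_at_max (G : FinGraph) (g : G.V → ℤ) (u : G.V)
    (hmax : ∀ x, g x ≤ g u) (e : G.E) : edgeLap G g e u ≤ 0 := by
  unfold edgeLap
  induction G.ψ e using Sym2.ind with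
  | _ a b =>
    simp only [Sym2.lift_mk]
    have ha := hmax a
    have hb := hmax b
    split_ifs with h1 h2 h2 <;> (try subst h1) <;> (try subst h2) <;> omega

lemma harmonic_step (G : FinGraph) (g : G.V → ℤ) (hLap : ∀ v, Lap G g v = 0)
    (u w : G.V) (hmax : ∀ x, g x ≤ g u) (hadj : G.Adj u w) : g w = g u := by
  obtain ⟨e, he⟩ := hadj
  have hsum : ∑ e : G.E, edgeLap G g e u = 0 := hLap u
  have hzero : ∀ e' ∈ Finset.univ, edgeLap G g e' u = 0 := by
    intro e' _
    exact (Finset.sum_eq_zero_iff_of_nonpos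
      (fun e' _ => edgeLap_nonpos_at_max G g u hmax e')).1 hsum e' (Finset.mem_univ e')
  have he0 : edgeLap G g e u = 0 := hzero e (Finset.mem_univ e)
  unfold edgeLap at he0
  rw [he] at he0
  simp only [Sym2.lift_mk] at he0
  by_cases huw : u = w
  · rw [huw]
  · simp [huw] at he0
    omega

end Aux

open FinGraph in
/-- If `Δ(f) = D₁ - D₂` for real divisors `D₁, D₂` on a
connected graph with a real structure, then `f̄ = f`. -/
theorem conj_eq_self_of_principal_real (G : FinGraph) (σ : RealStructure G)
    (hG : G.Connected) (D₁ D₂ : G.V → ℤ) (h₁ : IsRealDiv σ D₁)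
    (h₂ : IsRealDiv σ D₂) (f : G.V → ℤ) (hf : Lap G f = D₁ - D₂) :
    ∀ v : G.V, f (σ.ιV v) = f v := by
  classical
  set g : G.V → ℤ := (fun x => f (σ.ιV x)) - f with hg
  have hD₁ : ∀ v, D₁ (σ.ιV v) = D₁ v := fun v => congrFun h₁ v
  have hD₂ : ∀ v, D₂ (σ.ιV v) = D₂ v := fun v => congrFun h₂ v
  have hLap : ∀ v, Lap G g v = 0 := by
    intro v
    have hsub : Lap G g v = Lap G (fun x => f (σ.ιV x)) v - Lap G f v := by
      unfold Lap
      rw [← Finset.sum_sub_distrib]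
      exact Finset.sum_congr rfl (fun e _ => edgeLap_sub_aux G _ f e v)
    rw [hsub, Lap_conj_aux, hf]
    simp [hD₁ v, hD₂ v]
  haveI : Nonempty G.V := hG.1
  obtain ⟨u, hu⟩ := Finite.exists_max g
  have hconst : ∀ w, Relation.ReflTransGen G.Adj u w → g w = g u := by
    intro w hw
    induction hw with
    | refl => rfl
    | tail _ hadj ih =>
      rw [← ih]
      refine harmonic_step G g hLap _ _ (fun x => ?_) hadj
      rw [ih]; exact hu x
  have hall : ∀ w, g w = g u := fun w => hconst w (hG.2 u w)
  have hzero : g u = 0 := by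
    have h1 := hall u
    have h2 := hall (σ.ιV u)
    have : g u + g (σ.ιV u) = 0 := by
      simp only [hg, Pi.sub_apply, σ.ιV_invol]
      ring
    omega
  intro v
  have := hall v
  rw [hzero] at this
  simpa [hg, sub_eq_zero] using this
end

section
/- Let G be a connected finite graph with a real structure, let D_1 and D_2 be linearly equivalent real divisors on G, and let G' be a connected component of the real locus graph G(ℝ). Then deg(D_1|_{G'}) ≡ deg(D_2|_{G'}) (mod 2), where D|_{G'} denotes the restriction Σ_{v ∈ V(G')} D(v) v. -/
namespace FinGraphAux

open FinGraph

variable {G : FinGraph}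

lemma sym2_exists (z : Sym2 G.V) : ∃ a b, z = s(a, b) :=
  z.ind fun a b => ⟨a, b, rfl⟩

lemma edgeLap_apply (f : G.V → ℤ) (e : G.E) (a b v : G.V) (h : G.ψ e = s(a, b)) :
    edgeLap G f e v =
      (if v = a then f b - f a else 0) + (if v = b then f a - f b else 0) := by
  rw [edgeLap, h, Sym2.lift_mk]

lemma Lap_conj (σ : RealStructure G) (f : G.V → ℤ) (v : G.V) :
    Lap G f (σ.ιV v) = Lap G (fun w => f (σ.ιV w)) v := by
  have hinj : Function.Injective σ.ιV :=
    Function.Involutive.injective σ.ιV_invol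
  unfold Lap
  rw [← Equiv.sum_comp (Function.Involutive.toPerm σ.ιE (show Function.Involutive σ.ιE from σ.ιE_invol))
    (fun e => edgeLap G f e (σ.ιV v))]
  apply Finset.sum_congr rfl
  intro e _
  obtain ⟨a, b, hab⟩ := sym2_exists (G.ψ e)
  have h2 : G.ψ (σ.ιE e) = s(σ.ιV a, σ.ιV b) := by
    rw [σ.compat, hab, Sym2.map_pair_eq]
  simp only [Function.Involutive.coe_toPerm]
  rw [edgeLap_apply f _ (σ.ιV a) (σ.ιV b) (σ.ιV v) h2,
    edgeLap_apply (fun w => f (σ.ιV w)) e a b v hab]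
  simp [hinj.eq_iff]

lemma Lap_sub (f h : G.V → ℤ) (v : G.V) :
    Lap G (fun w => f w - h w) v = Lap G f v - Lap G h v := by
  unfold Lap
  rw [← Finset.sum_sub_distrib]
  apply Finset.sum_congr rfl
  intro e _
  obtain ⟨a, b, hab⟩ := sym2_exists (G.ψ e)
  rw [edgeLap_apply _ e a b v hab, edgeLap_apply f e a b v hab,
    edgeLap_apply h e a b v hab]
  split_ifs <;> ring

lemma ends_eq_of_Lap_zero (g : G.V → ℤ) (hg : ∀ v, Lap G g v = 0)
    (e : G.E) (a b : G.V) (hab : G.ψ e = s(a, b)) : g a = g b := by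
  classical
  set Q : G.E → ℤ := fun e =>
    Sym2.lift ⟨fun a b => (g a - g b) ^ 2, fun a b => by ring⟩ (G.ψ e) with hQ
  have key : ∀ e : G.E, ∑ v, g v * edgeLap G g e v = -Q e := by
    intro e
    obtain ⟨a, b, hab⟩ := sym2_exists (G.ψ e)
    have h1 : ∀ v, g v * edgeLap G g e v =
        (if v = a then g v * (g b - g a) else 0) +
        (if v = b then g v * (g a - g b) else 0) := by
      intro v
      rw [edgeLap_apply g e a b v hab]
      split_ifs <;> ring
    rw [Finset.sum_congr rfl (fun v _ => h1 v), Finset.sum_add_distrib,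
      Finset.sum_ite_eq' Finset.univ a (fun v => g v * (g b - g a)),
      Finset.sum_ite_eq' Finset.univ b (fun v => g v * (g a - g b))]
    simp only [Finset.mem_univ, if_true, hQ, hab, Sym2.lift_mk]
    ring
  have total : ∑ e' : G.E, Q e' = 0 := by
    have h0 : (0 : ℤ) = ∑ v, g v * Lap G g v := by
      simp [hg]
    have h1 : ∑ v, g v * Lap G g v = ∑ e' : G.E, ∑ v, g v * edgeLap G g e' v := by
      unfold Lap
      rw [Finset.sum_comm]
      exact Finset.sum_congr rfl fun v _ => Finset.mul_sum _ _ _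
    have h2 : ∑ e' : G.E, ∑ v, g v * edgeLap G g e' v = -∑ e' : G.E, Q e' := by
      rw [← Finset.sum_neg_distrib]
      exact Finset.sum_congr rfl fun e' _ => key e'
    have hsum : ∑ e' : G.E, Q e' = 0 := by linarith
    exact hsum
  have hnonneg : ∀ e' ∈ Finset.univ, (0 : ℤ) ≤ Q e' := by
    intro e' _
    obtain ⟨x, y, hxy⟩ := sym2_exists (G.ψ e')
    rw [hQ]
    simp only [hxy, Sym2.lift_mk]
    positivity
  have hQe : Q e = 0 :=
    (Finset.sum_eq_zero_iff_of_nonneg hnonneg).mp total e (Finset.mem_univ e)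
  rw [hQ] at hQe
  simp only [hab, Sym2.lift_mk] at hQe
  have := pow_eq_zero_iff (n := 2) (by norm_num) |>.mp hQe
  linarith

lemma g_const (hG : G.Connected) (g : G.V → ℤ)
    (hends : ∀ (e : G.E) (a b : G.V), G.ψ e = s(a, b) → g a = g b) :
    ∀ v w : G.V, g v = g w := by
  intro v w
  induction hG.2 v w with
  | refl => rfl
  | tail _ hadj ih =>
      obtain ⟨e, he⟩ := hadj
      exact ih.trans (hends e _ _ he)

end FinGraphAux

open FinGraph in
/-- The parity of the degree of the restriction of a real
divisor to a connected component of `G(ℝ)` is invariant under linear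
equivalence. -/
theorem degOn_parity_invariant (G : FinGraph) (σ : RealStructure G)
    (hG : G.Connected) (D₁ D₂ : G.V → ℤ) (h₁ : IsRealDiv σ D₁)
    (h₂ : IsRealDiv σ D₂) (h : LinEquiv G D₁ D₂) (c : CompR σ) :
    degOn σ c D₁ ≡ degOn σ c D₂ [ZMOD 2] := by
  classical
  obtain ⟨f, hf⟩ := h
  have hLapf : ∀ v, Lap G f v = D₂ v - D₁ v := by
    intro v
    have := congrFun hf v
    simp only [Pi.add_apply] at this
    linarith
  have hfι : ∀ v, f (σ.ιV v) = f v := by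
    have hLapg : ∀ v, Lap G (fun w => f w - f (σ.ιV w)) v = 0 := by
      intro v
      rw [FinGraphAux.Lap_sub]
      have c1 : D₁ (σ.ιV v) = D₁ v := congrFun h₁ v
      have c2 : D₂ (σ.ιV v) = D₂ v := congrFun h₂ v
      have e1 : Lap G f (σ.ιV v) = Lap G f v := by
        rw [hLapf, hLapf, c1, c2]
      have e2 := FinGraphAux.Lap_conj σ f v
      have e3 : Lap G (fun w => f (σ.ιV w)) v = Lap G f v := e2.symm.trans e1
      linarith
    have hc := FinGraphAux.g_const hG _
      (fun e a b hab => FinGraphAux.ends_eq_of_Lap_zero _ hLapg e a b hab)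
    intro v
    have h0 := hc v (σ.ιV v)
    rw [σ.ιV_invol] at h0
    linarith
  set S : Finset G.V := Finset.univ.filter (fun v => ∃ hv : RealV σ v,
    Quotient.mk (Relation.EqvGen.setoid (adjR σ)) (⟨v, hv⟩ : RV σ) = c) with hS
  have hmemS : ∀ x : G.V, x ∈ S ↔ ∃ hv : RealV σ x,
      Quotient.mk (Relation.EqvGen.setoid (adjR σ)) (⟨x, hv⟩ : RV σ) = c := by
    intro x
    rw [hS]
    simp [Finset.mem_filter]
  have hSreal : ∀ v ∈ S, σ.ιV v = v := by
    intro v hv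
    obtain ⟨hr, _⟩ := (hmemS v).mp hv
    exact hr
  have hdeg : ∀ D : G.V → ℤ, degOn σ c D = ∑ v ∈ S, D v := by
    intro D
    haveI : Fintype (RV σ) := by
      unfold RV
      exact Subtype.fintype _
    refine (finsum_eq_sum_of_fintype _).trans ?_
    exact Finset.sum_bij'
      (fun a _ => a.1.1)
      (fun b hb => ⟨⟨b, ((hmemS b).mp hb).choose⟩, ((hmemS b).mp hb).choose_spec⟩)
      (fun a _ => (hmemS a.1.1).mpr ⟨a.1.2, a.2⟩)
      (fun b _ => Finset.mem_univ _)
      (fun a _ => Subtype.ext (Subtype.ext rfl))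
      (fun b _ => rfl)
      (fun a _ => rfl)
  have hdiff : degOn σ c D₂ - degOn σ c D₁ = ∑ e : G.E, ∑ v ∈ S, edgeLap G f e v := by
    rw [hdeg, hdeg, ← Finset.sum_sub_distrib, Finset.sum_comm]
    apply Finset.sum_congr rfl
    intro v _
    rw [← hLapf v]
    rfl
  have TC1 : ∀ e : G.E, ∑ v ∈ S, edgeLap G f (σ.ιE e) v = ∑ v ∈ S, edgeLap G f e v := by
    intro e
    obtain ⟨a, b, hab⟩ := FinGraphAux.sym2_exists (G.ψ e)
    have h2 : G.ψ (σ.ιE e) = s(σ.ιV a, σ.ιV b) := by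
      rw [σ.compat, hab, Sym2.map_pair_eq]
    apply Finset.sum_congr rfl
    intro v hv
    have hvr := hSreal v hv
    rw [FinGraphAux.edgeLap_apply f _ (σ.ιV a) (σ.ιV b) v h2,
      FinGraphAux.edgeLap_apply f e a b v hab, hfι a, hfι b]
    have ea : (v = σ.ιV a) ↔ (v = a) := by
      constructor
      · intro hh
        subst hh
        rw [σ.ιV_invol] at hvr
        exact hvr.symm
      · intro hh
        subst hh
        exact hvr.symm
    have eb : (v = σ.ιV b) ↔ (v = b) := by
      constructor
      · intro hh
        subst hh
        rw [σ.ιV_invol] at hvr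
        exact hvr.symm
      · intro hh
        subst hh
        exact hvr.symm
    simp only [ea, eb]
  have TC2 : ∀ e : G.E, σ.ιE e = e → ∑ v ∈ S, edgeLap G f e v = 0 := by
    intro e he
    obtain ⟨a, b, hab⟩ := FinGraphAux.sym2_exists (G.ψ e)
    have hTe : ∑ v ∈ S, edgeLap G f e v =
        (if a ∈ S then f b - f a else 0) + (if b ∈ S then f a - f b else 0) := by
      rw [Finset.sum_congr rfl (fun v _ => FinGraphAux.edgeLap_apply f e a b v hab),
        Finset.sum_add_distrib, Finset.sum_ite_eq' S a (fun _ => f b - f a),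
        Finset.sum_ite_eq' S b (fun _ => f a - f b)]
    rw [hTe]
    have h3 : s(a, b) = s(σ.ιV a, σ.ιV b) := by
      conv_lhs => rw [← hab, ← he]
      rw [σ.compat, hab, Sym2.map_pair_eq]
    by_cases hra : RealV σ a
    · by_cases hrb : RealV σ b
      · have hni : NonIsolatedRealE σ e := ⟨he, by
          intro v hv
          rw [hab, Sym2.mem_iff] at hv
          rcases hv with hh | hh <;> subst hh <;> assumption⟩
        have hq : Quotient.mk (Relation.EqvGen.setoid (adjR σ)) (⟨a, hra⟩ : RV σ)
            = Quotient.mk (Relation.EqvGen.setoid (adjR σ)) (⟨b, hrb⟩ : RV σ) :=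
          Quotient.sound (Relation.EqvGen.rel _ _ ⟨e, hni, hab⟩)
        have hmem : a ∈ S ↔ b ∈ S := by
          rw [hmemS, hmemS]
          constructor
          · rintro ⟨hh, hcc⟩
            exact ⟨hrb, by rw [← hq]; exact hcc⟩
          · rintro ⟨hh, hcc⟩
            exact ⟨hra, by rw [hq]; exact hcc⟩
        by_cases hm : a ∈ S
        · rw [if_pos hm, if_pos (hmem.mp hm)]
          ring
        · rw [if_neg hm, if_neg (fun hb => hm (hmem.mpr hb))]
          ring
      · exfalso
        rcases Sym2.eq_iff.mp h3 with ⟨h4, h5⟩ | ⟨h4, h5⟩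
        · exact hrb h5.symm
        · apply hrb
          show σ.ιV b = b
          have hba : b = a := by rw [h5, hra]
          rw [hba]
          exact hra
    · have hrb : ¬ RealV σ b := by
        rcases Sym2.eq_iff.mp h3 with ⟨h4, h5⟩ | ⟨h4, h5⟩
        · exact absurd h4.symm hra
        · intro hb
          apply hra
          show σ.ιV a = a
          rw [← h5]
          exact (h4.trans hb).symm
      have hna : a ∉ S := fun hhh => hra (hSreal a hhh)
      have hnb : b ∉ S := fun hhh => hrb (hSreal b hhh)
      rw [if_neg hna, if_neg hnb]
      ring
  have hdvd : (2 : ℤ) ∣ (degOn σ c D₂ - degOn σ c D₁) := by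
    rw [hdiff]
    have hz : ((∑ e : G.E, ∑ v ∈ S, edgeLap G f e v : ℤ) : ZMod 2) = 0 := by
      rw [Int.cast_sum]
      apply Finset.sum_involution (fun e _ => σ.ιE e)
      · intro e _
        show ((∑ v ∈ S, edgeLap G f e v : ℤ) : ZMod 2)
          + ((∑ v ∈ S, edgeLap G f (σ.ιE e) v : ℤ) : ZMod 2) = 0
        rw [TC1 e]
        exact CharTwo.add_self_eq_zero _
      · intro e _ hne heq
        apply hne
        show ((∑ v ∈ S, edgeLap G f e v : ℤ) : ZMod 2) = 0
        rw [TC2 e heq]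
        simp
      · intro e _
        exact Finset.mem_univ _
      · intro e _
        exact σ.ιE_invol e
    exact_mod_cast (ZMod.intCast_zmod_eq_zero_iff_dvd _ 2).mp hz
  exact Int.modEq_iff_dvd.mpr hdvd
end

section
/- Let G be an M-graph and let D be an effective real divisor on G. Then D is linearly equivalent to a totally real effective divisor on G. -/
namespace MGraphAux

open scoped Classical

variable {α β : Type} (q : β → Sym2 α) (r : α)

/-- adjacency via edges -/
def gAdj (a b : α) : Prop := ∃ e, q e = s(a, b)

/-- reachable from `r` by a walk of length exactly `n` -/
def reachN : ℕ → α → Prop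
  | 0, a => a = r
  | (n+1), a => ∃ b, reachN n b ∧ gAdj q b a

lemma gAdj_symm {a b : α} (h : gAdj q a b) : gAdj q b a := by
  obtain ⟨e, he⟩ := h; exact ⟨e, by rw [he, Sym2.eq_swap]⟩

lemma reach_of_rtg {a : α} (h : Relation.ReflTransGen (gAdj q) r a) :
    ∃ n, reachN q r n a := by
  induction h with
  | refl => exact ⟨0, rfl⟩
  | tail _ hstep ih => obtain ⟨n, hn⟩ := ih; exact ⟨n + 1, _, hn, hstep⟩

variable (hconn : ∀ a : α, ∃ n, reachN q r n a)

noncomputable def dist (a : α) : ℕ := @Nat.find _ (Classical.decPred _) (hconn a)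

lemma dist_spec (a : α) : reachN q r (dist q r hconn a) a :=
  @Nat.find_spec _ (Classical.decPred _) (hconn a)

lemma dist_le {a : α} {n : ℕ} (h : reachN q r n a) : dist q r hconn a ≤ n :=
  @Nat.find_min' _ (Classical.decPred _) (hconn a) _ h

lemma dist_r : dist q r hconn r = 0 :=
  Nat.le_zero.mp (dist_le q r hconn (by exact rfl))

lemma eq_r_of_dist_eq_zero {a : α} (h : dist q r hconn a = 0) : a = r := by
  have := dist_spec q r hconn a; rw [h] at this; exact this

lemma exists_disc {a : α} (ha : a ≠ r) :
    ∃ (e : β) (b : α), q e = s(b, a) ∧ dist q r hconn b + 1 = dist q r hconn a := by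
  have hs := dist_spec q r hconn a
  have h0 : dist q r hconn a ≠ 0 := fun h => ha (eq_r_of_dist_eq_zero q r hconn h)
  obtain ⟨k, hk⟩ := Nat.exists_eq_succ_of_ne_zero h0
  rw [hk] at hs
  obtain ⟨b, hb, e, he⟩ := hs
  refine ⟨e, b, he, ?_⟩
  have h1 : dist q r hconn b ≤ k := dist_le q r hconn hb
  have h2 : dist q r hconn a ≤ dist q r hconn b + 1 :=
    dist_le q r hconn ⟨b, dist_spec q r hconn b, e, he⟩
  omega

/-- the parent of a vertex (junk value `r` at the root) -/
noncomputable def par (a : α) : α :=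
  if h : a = r then r else (exists_disc q r hconn h).choose_spec.choose

lemma par_spec {a : α} (ha : a ≠ r) :
    (∃ e, q e = s(par q r hconn a, a)) ∧
      dist q r hconn (par q r hconn a) + 1 = dist q r hconn a := by
  rw [par, dif_neg ha]
  obtain ⟨h1, h2⟩ := (exists_disc q r hconn ha).choose_spec.choose_spec
  exact ⟨⟨_, h1⟩, h2⟩

/-- the discovery edge of a non-root vertex -/
noncomputable def discS (a : {a : α // a ≠ r}) : β :=
  (exists_disc q r hconn a.2).choose

lemma discS_spec (a : {a : α // a ≠ r}) :
    q (discS q r hconn a) = s(par q r hconn a.1, a.1) := by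
  have h1 := (exists_disc q r hconn a.2).choose_spec.choose_spec.1
  have h2 : par q r hconn a.1 = (exists_disc q r hconn a.2).choose_spec.choose := by
    rw [par, dif_neg a.2]
  rw [h2]; exact h1

lemma discS_inj : Function.Injective (discS q r hconn) := by
  intro a b h
  have hqa := discS_spec q r hconn a
  have hqb := discS_spec q r hconn b
  have hda := (par_spec q r hconn a.2).2
  have hdb := (par_spec q r hconn b.2).2
  rw [h, hqb] at hqa
  rw [Sym2.eq_iff] at hqa
  rcases hqa with ⟨h1, h2⟩ | ⟨h1, h2⟩
  · exact Subtype.ext h2.symm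
  · exfalso
    have e1 : dist q r hconn b.1 + 1 = dist q r hconn a.1 := by rw [← h2] at hda; exact hda
    have e2 : dist q r hconn a.1 + 1 = dist q r hconn b.1 := by rw [← h1]; exact hdb
    omega

include hconn in
lemma card_le [Finite α] [Finite β] : Nat.card α ≤ Nat.card β + 1 := by
  have h1 : Nat.card {a : α // a ≠ r} ≤ Nat.card β :=
    Nat.card_le_card_of_injective _ (discS_inj q r hconn)
  have h2 : Nat.card {a : α // a ≠ r} + 1 = Nat.card α := by
    classical
    cases nonempty_fintype α
    rw [Nat.card_eq_fintype_card, Nat.card_eq_fintype_card]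
    rw [Fintype.card_subtype_compl (p := fun a : α => a = r)]
    have : Fintype.card {a : α // a = r} = 1 := Fintype.card_eq_one_iff.mpr
      ⟨⟨r, rfl⟩, fun b => Subtype.ext b.2⟩
    rw [this]
    have : 1 ≤ Fintype.card α := Fintype.card_pos_iff.mpr ⟨r⟩
    omega
  omega

/-- In the equality case every edge is a discovery edge. -/
lemma discS_surj [Finite α] [Finite β] (hcard : Nat.card β + 1 = Nat.card α) :
    Function.Surjective (discS q r hconn) := by
  classical
  cases nonempty_fintype α; cases nonempty_fintype β
  have h2 : Nat.card {a : α // a ≠ r} + 1 = Nat.card α := by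
    rw [Nat.card_eq_fintype_card, Nat.card_eq_fintype_card]
    rw [Fintype.card_subtype_compl (p := fun a : α => a = r)]
    have h3 : Fintype.card {a : α // a = r} = 1 := Fintype.card_eq_one_iff.mpr
      ⟨⟨r, rfl⟩, fun b => Subtype.ext b.2⟩
    rw [h3]
    have : 1 ≤ Fintype.card α := Fintype.card_pos_iff.mpr ⟨r⟩
    omega
  have hcard2 : Fintype.card {a : α // a ≠ r} = Fintype.card β := by
    rw [Nat.card_eq_fintype_card, Nat.card_eq_fintype_card] at h2 hcard
    omega
  exact ((Fintype.bijective_iff_injective_and_card _).mpr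
    ⟨discS_inj q r hconn, hcard2⟩).2

/-- `inSub u z` : `u` is an ancestor of `z` (z's parent path passes through u). -/
def inSub (u : α) (z : α) : Prop :=
  Relation.ReflTransGen (fun x y => x ≠ r ∧ y = par q r hconn x) z u

lemma inSub_self (u : α) : inSub q r hconn u u := Relation.ReflTransGen.refl

lemma dist_le_of_inSub {u z : α} (h : inSub q r hconn u z) :
    dist q r hconn u ≤ dist q r hconn z := by
  induction h with
  | refl => exact le_refl _
  | tail hxy hstep ih =>
      obtain ⟨hx, hy⟩ := hstep
      have hd := (par_spec q r hconn hx).2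
      rw [hy]
      omega

lemma dist_pos {a : α} (ha : a ≠ r) : 0 < dist q r hconn a := by
  rcases Nat.eq_zero_or_pos (dist q r hconn a) with h | h
  · exact absurd (eq_r_of_dist_eq_zero q r hconn h) ha
  · exact h

lemma not_inSub_par {u : α} (hu : u ≠ r) : ¬ inSub q r hconn u (par q r hconn u) := by
  intro h
  have h1 := dist_le_of_inSub q r hconn h
  have h2 := (par_spec q r hconn hu).2
  have h3 := dist_pos q r hconn hu
  omega

lemma inSub_cases {u z : α} (h : inSub q r hconn u z) (hne : z ≠ u) :
    z ≠ r ∧ inSub q r hconn u (par q r hconn z) := by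
  rcases Relation.ReflTransGen.cases_head h with h1 | ⟨c, ⟨hz, hc⟩, h2⟩
  · exact absurd h1 hne
  · exact ⟨hz, hc ▸ h2⟩

lemma inSub_of_par {z : α} (hz : z ≠ r) {u : α}
    (h : inSub q r hconn u (par q r hconn z)) : inSub q r hconn u z :=
  Relation.ReflTransGen.head ⟨hz, rfl⟩ h

/-- The fundamental-cut lemma: in the equality case, the only edge leaving the
set of descendants of `u` is the discovery edge of `u`. -/
lemma boundary_eq [Finite α] [Finite β] (hcard : Nat.card β + 1 = Nat.card α)
    {u x y : α} (hu : u ≠ r) (e : β) (he : q e = s(x, y))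
    (hx : inSub q r hconn u x) (hy : ¬ inSub q r hconn u y) :
    x = u ∧ y = par q r hconn u ∧ e = discS q r hconn ⟨u, hu⟩ := by
  obtain ⟨⟨z, hz⟩, hze⟩ := discS_surj q r hconn hcard e
  have hq := discS_spec q r hconn ⟨z, hz⟩
  rw [hze, he] at hq
  rw [Sym2.eq_iff] at hq
  have hq' : (x = par q r hconn z ∧ y = z) ∨ (x = z ∧ y = par q r hconn z) := hq
  rcases hq' with ⟨h1, h2⟩ | ⟨h1, h2⟩
  · -- x = par z, y = z
    exfalso
    apply hy
    rw [h2]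
    exact inSub_of_par q r hconn hz (h1 ▸ hx)
  · -- x = z, y = par z
    have hxu : x = u := by
      by_contra hne
      obtain ⟨hx', hsub⟩ := inSub_cases q r hconn hx hne
      apply hy
      rw [h2, ← h1]
      exact hsub
    have hzu : z = u := h1.symm.trans hxu
    refine ⟨hxu, by rw [h2, hzu], ?_⟩
    rw [← hze]
    have heq : (⟨z, hz⟩ : {a : α // a ≠ r}) = ⟨u, hu⟩ := by subst hzu; rfl
    rw [heq]

end MGraphAux
namespace MGraphAux

open scoped Classical in
/-- Cardinality of the quotient by a free involution. -/
lemma card_quot_invol {γ : Type} [Finite γ] (i : γ → γ)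
    (hinv : ∀ a, i (i a) = a) (hfree : ∀ a, i a ≠ a) (s : Setoid γ)
    (hrel : ∀ a b, s.r a b ↔ (a = b ∨ i a = b)) :
    Nat.card γ = 2 * Nat.card (Quotient s) := by
  have key : Nat.card γ = Nat.card (Quotient s × Bool) := by
    apply Nat.card_eq_of_bijective
      (f := fun a => (Quotient.mk s a, decide (a = (Quotient.mk s a).out)))
    constructor
    · intro a b hab
      have h1 : Quotient.mk s a = Quotient.mk s b := congrArg Prod.fst hab
      have h2 : decide (a = (Quotient.mk s a).out) = decide (b = (Quotient.mk s b).out) :=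
        congrArg Prod.snd hab
      rw [h1] at h2
      rw [decide_eq_decide] at h2
      have ha : s.r a (Quotient.mk s a).out := Setoid.symm (Quotient.mk_out a)
      have hb : s.r b (Quotient.mk s b).out := Setoid.symm (Quotient.mk_out b)
      rw [h1] at ha
      rw [hrel] at ha hb
      by_cases hc : a = (Quotient.mk s b).out
      · have hcb : b = (Quotient.mk s b).out := h2.mp hc
        exact hcb ▸ hc
      · have hcb : ¬ b = (Quotient.mk s b).out := fun h => hc (h2.mpr h)
        have hia : i a = (Quotient.mk s b).out := ha.resolve_left hc
        have hib : i b = (Quotient.mk s b).out := hb.resolve_left hcb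
        have := hia.trans hib.symm
        calc a = i (i a) := (hinv a).symm
        _ = i (i b) := by rw [this]
        _ = b := hinv b
    · rintro ⟨q, b⟩
      cases b
      · refine ⟨i q.out, ?_⟩
        dsimp only
        have hq : Quotient.mk s (i q.out) = q := by
          have : s.r (i q.out) q.out := by
            rw [hrel]; right; exact hinv q.out
          calc Quotient.mk s (i q.out) = Quotient.mk s q.out := Quotient.sound this
          _ = q := Quotient.out_eq q
        rw [hq]
        have : ¬ (i q.out = q.out) := hfree q.out
        simp [this]
      · refine ⟨q.out, ?_⟩
        dsimp only
        have hq : Quotient.mk s q.out = q := Quotient.out_eq q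
        rw [hq]
        simp
  rw [key, Nat.card_prod]
  simp [mul_comm]

end MGraphAux

namespace MGraphAux

open FinGraph
open scoped Classical

variable {G : FinGraph} (σ : RealStructure G)

/-! ### Basic lemmas on real structures -/

lemma realV_iota {v : G.V} : RealV σ (σ.ιV v) ↔ RealV σ v := by
  unfold RealV
  constructor
  · intro h
    have := congrArg σ.ιV h
    rwa [σ.ιV_invol, σ.ιV_invol] at this
  · intro h; rw [h, h]

lemma realE_iota {e : G.E} : RealE σ (σ.ιE e) ↔ RealE σ e := by
  unfold RealE
  constructor
  · intro h
    have := congrArg σ.ιE h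
    rwa [σ.ιE_invol, σ.ιE_invol] at this
  · intro h; rw [h, h]

/-- The set of non-real vertices. -/
abbrev NV := {v : G.V // ¬ RealV σ v}

/-- The set of non-real edges. -/
abbrev NE := {e : G.E // ¬ RealE σ e}

instance : Finite (NV σ) := Subtype.finite
instance : Finite (NE σ) := Subtype.finite
instance : Finite (RV σ) := Subtype.finite
instance : Finite (CompR σ) := Quotient.finite _

/-- conjugation on non-real vertices -/
def iNV (x : NV σ) : NV σ := ⟨σ.ιV x.1, fun h => x.2 ((realV_iota σ).mp h)⟩

/-- conjugation on non-real edges -/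
def iNE (x : NE σ) : NE σ := ⟨σ.ιE x.1, fun h => x.2 ((realE_iota σ).mp h)⟩

/-- the pairing setoid on non-real vertices -/
def sV : Setoid (NV σ) where
  r a b := a.1 = b.1 ∨ σ.ιV a.1 = b.1
  iseqv := by
    constructor
    · intro a; left; rfl
    · rintro a b (h | h)
      · left; exact (Subtype.ext_iff.mp (Subtype.ext h)).symm
      · right; rw [← h, σ.ιV_invol]
    · rintro a b c (h | h) (h' | h')
      · left; rw [h, h']
      · right; rw [h, h']
      · right; rw [h, h']
      · left; rw [← h', ← h, σ.ιV_invol]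

/-- the pairing setoid on non-real edges -/
def sE : Setoid (NE σ) where
  r a b := a.1 = b.1 ∨ σ.ιE a.1 = b.1
  iseqv := by
    constructor
    · intro a; left; rfl
    · rintro a b (h | h)
      · left; exact h.symm
      · right; rw [← h, σ.ιE_invol]
    · rintro a b c (h | h) (h' | h')
      · left; rw [h, h']
      · right; rw [h, h']
      · right; rw [h, h']
      · left; rw [← h', ← h, σ.ιE_invol]

/-- pairs of conjugate non-real vertices -/
def P := Quotient (sV σ)

/-- pairs of conjugate non-real edges -/
def Fq := Quotient (sE σ)

instance : Finite (P σ) := Quotient.finite _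
instance : Finite (Fq σ) := Quotient.finite _

/-- The vertex set of the quotient graph: real components plus pairs of
non-real vertices. -/
def W := CompR σ ⊕ P σ

instance : Finite (W σ) := by unfold W; infer_instance

/-- the projection from vertices of `G` to `W` -/
noncomputable def projW (v : G.V) : W σ :=
  if h : RealV σ v then Sum.inl (Quotient.mk _ (⟨v, h⟩ : RV σ))
  else Sum.inr (Quotient.mk _ (⟨v, h⟩ : NV σ))

lemma projW_real {v : G.V} (h : RealV σ v) :
    projW σ v = Sum.inl (Quotient.mk _ (⟨v, h⟩ : RV σ)) := dif_pos h

lemma projW_nonreal {v : G.V} (h : ¬ RealV σ v) :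
    projW σ v = Sum.inr (Quotient.mk _ (⟨v, h⟩ : NV σ)) := dif_neg h

lemma projW_iota (v : G.V) : projW σ (σ.ιV v) = projW σ v := by
  by_cases h : RealV σ v
  · have hv : (⟨σ.ιV v, (realV_iota σ).mpr h⟩ : RV σ) = ⟨v, h⟩ := Subtype.ext h
    rw [projW_real σ ((realV_iota σ).mpr h), projW_real σ h, hv]
  · rw [projW_nonreal σ h, projW_nonreal σ (by rwa [realV_iota])]
    congr 1
    apply Quotient.sound
    show σ.ιV v = v ∨ σ.ιV (σ.ιV v) = v
    right; exact σ.ιV_invol v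

lemma projW_eq_inr {v : G.V} {x : NV σ}
    (h : projW σ v = Sum.inr (Quotient.mk _ x)) : v = x.1 ∨ v = σ.ιV x.1 := by
  by_cases hv : RealV σ v
  · rw [projW_real σ hv] at h; exact absurd h (by simp)
  · rw [projW_nonreal σ hv] at h
    have h2 : Quotient.mk (sV σ) ⟨v, hv⟩ = Quotient.mk _ x := by
      injection h
    have h3 := Quotient.exact h2
    rcases h3 with h3 | h3
    · left; exact h3
    · right
      have h4 : σ.ιV v = x.1 := h3
      rw [← h4, σ.ιV_invol]

/-- the edge map of the quotient graph -/
noncomputable def qQ : Fq σ → Sym2 (W σ) :=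
  Quotient.lift (fun e : NE σ => (G.ψ e.1).map (projW σ)) (by
    rintro a b (h | h)
    · rw [h]
    · rw [← h, σ.compat, Sym2.map_map]
      congr 1
      funext v
      exact (projW_iota σ v).symm)

lemma qQ_mk (e : NE σ) : qQ σ (Quotient.mk _ e) = (G.ψ e.1).map (projW σ) := rfl

end MGraphAux

namespace MGraphAux

open FinGraph
open scoped Classical

lemma eqvGen_of_rtg {α : Type*} {rel : α → α → Prop} {a b : α}
    (h : Relation.ReflTransGen rel a b) : Relation.EqvGen rel a b := by
  induction h with
  | refl => exact Relation.EqvGen.refl _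
  | tail _ h2 ih => exact Relation.EqvGen.trans _ _ _ ih (Relation.EqvGen.rel _ _ h2)

lemma numComponents_eq_one {G : FinGraph} (hc : G.Connected) : numComponents G = 1 := by
  rw [numComponents, Nat.card_eq_one_iff_unique]
  constructor
  · constructor
    intro a b
    induction a using Quotient.ind
    induction b using Quotient.ind
    exact Quotient.sound (eqvGen_of_rtg (hc.2 _ _))
  · exact hc.1.map (Quotient.mk _)

/-- a helper: sum over fibers -/
lemma sum_card_fiber {X C : Type} [Fintype X] [Fintype C] (f : X → C) :
    ∑ c : C, Nat.card {x : X // f x = c} = Nat.card X := by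
  simp_rw [Nat.card_eq_fintype_card, Fintype.card_subtype]
  exact (Finset.card_eq_sum_card_fiberwise (fun x _ => Finset.mem_univ (f x))).symm

variable {G : FinGraph} (σ : RealStructure G)

noncomputable instance : Fintype (CompR σ) := Fintype.ofFinite _
noncomputable instance : Fintype (RV σ) := Fintype.ofFinite _

lemma no_iso_forall (hM : IsMGraph σ) {e : G.E} (he : RealE σ e) :
    ∀ v ∈ G.ψ e, RealV σ v := by
  by_contra hcon
  push_neg at hcon
  obtain ⟨v, hv1, hv2⟩ := hcon
  exact hM.2.1 e ⟨he, v, hv1, hv2⟩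

lemma realE_iff_nonIso (hM : IsMGraph σ) (e : G.E) :
    RealE σ e ↔ NonIsolatedRealE σ e :=
  ⟨fun h => ⟨h, no_iso_forall σ hM h⟩, fun h => h.1⟩

lemma realEdge_comp_eq {e : G.E} (he : NonIsolatedRealE σ e) {a b : RV σ}
    (ha : a.1 ∈ G.ψ e) (hb : b.1 ∈ G.ψ e) :
    Quotient.mk (Relation.EqvGen.setoid (adjR σ)) a = Quotient.mk _ b := by
  by_cases hab : a = b
  · rw [hab]
  · have hne : a.1 ≠ b.1 := fun h => hab (Subtype.ext h)
    have hadj : adjR σ a b := ⟨e, he, (Sym2.mem_and_mem_iff hne).mp ⟨ha, hb⟩⟩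
    exact Quotient.sound (Relation.EqvGen.rel _ _ hadj)

/-- the chosen (real) endpoint of a non-isolated real edge -/
noncomputable def realEnd (e : {e : G.E // NonIsolatedRealE σ e}) : RV σ :=
  ⟨(G.ψ e.1).out.1, e.2.2 _ (Sym2.out_fst_mem _)⟩

lemma realEnd_mem (e : {e : G.E // NonIsolatedRealE σ e}) : (realEnd σ e).1 ∈ G.ψ e.1 :=
  Sym2.out_fst_mem _

lemma eFiber_iff (c : CompR σ) (x : {e : G.E // NonIsolatedRealE σ e}) :
    (∃ v : RV σ, v.1 ∈ G.ψ x.1 ∧ Quotient.mk (Relation.EqvGen.setoid (adjR σ)) v = c)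
      ↔ Quotient.mk (Relation.EqvGen.setoid (adjR σ)) (realEnd σ x) = c := by
  constructor
  · rintro ⟨v, hv, hc⟩
    rw [← hc]
    exact realEdge_comp_eq σ x.2 (realEnd_mem σ x) hv
  · intro h
    exact ⟨realEnd σ x, realEnd_mem σ x, h⟩

lemma card_eFiber (c : CompR σ) :
    Nat.card {e : G.E // NonIsolatedRealE σ e ∧
        ∃ v : RV σ, v.1 ∈ G.ψ e ∧ Quotient.mk (Relation.EqvGen.setoid (adjR σ)) v = c}
      = Nat.card {x : {e : G.E // NonIsolatedRealE σ e} //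
          Quotient.mk (Relation.EqvGen.setoid (adjR σ)) (realEnd σ x) = c} := by
  apply Nat.card_congr
  exact (Equiv.subtypeSubtypeEquivSubtypeInter _ _).symm.trans
    (Equiv.subtypeEquivRight (eFiber_iff σ c))

lemma sum_eC :
    (∑ c : CompR σ, (Nat.card {e : G.E // NonIsolatedRealE σ e ∧
        ∃ v : RV σ, v.1 ∈ G.ψ e ∧ Quotient.mk (Relation.EqvGen.setoid (adjR σ)) v = c} : ℤ))
      = (Nat.card {e : G.E // NonIsolatedRealE σ e} : ℤ) := by
  letI : Fintype {e : G.E // NonIsolatedRealE σ e} := Fintype.ofFinite _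
  rw [← Nat.cast_sum]
  norm_cast
  calc ∑ c : CompR σ, Nat.card {e : G.E // NonIsolatedRealE σ e ∧
        ∃ v : RV σ, v.1 ∈ G.ψ e ∧ Quotient.mk (Relation.EqvGen.setoid (adjR σ)) v = c}
      = ∑ c : CompR σ, Nat.card {x : {e : G.E // NonIsolatedRealE σ e} //
          Quotient.mk (Relation.EqvGen.setoid (adjR σ)) (realEnd σ x) = c} := by
        exact Finset.sum_congr rfl (fun c _ => card_eFiber σ c)
  _ = Nat.card {e : G.E // NonIsolatedRealE σ e} := sum_card_fiber _

lemma sum_vC :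
    (∑ c : CompR σ, (Nat.card {v : RV σ //
        Quotient.mk (Relation.EqvGen.setoid (adjR σ)) v = c} : ℤ))
      = (Nat.card (RV σ) : ℤ) := by
  rw [← Nat.cast_sum]
  norm_cast
  exact sum_card_fiber _

lemma sNum_eq (hM : IsMGraph σ) :
    sNum σ = 2 * (Nat.card (CompR σ) : ℤ)
      + (Nat.card {e : G.E // NonIsolatedRealE σ e} : ℤ) - (Nat.card (RV σ) : ℤ) := by
  have hiso : Nat.card {e : G.E // IsolatedRealE σ e} = 0 := by
    haveI : IsEmpty {e : G.E // IsolatedRealE σ e} := ⟨fun x => hM.2.1 x.1 x.2⟩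
    exact Nat.card_of_isEmpty
  rw [sNum, hiso, finsum_eq_sum_of_fintype]
  push_cast
  rw [zero_add]
  unfold compGenus
  rw [Finset.sum_add_distrib, Finset.sum_sub_distrib, Finset.sum_add_distrib]
  rw [sum_eC σ, sum_vC σ, Finset.sum_const]
  simp only [Finset.card_univ, nsmul_eq_mul, mul_one, Nat.card_eq_fintype_card]
  ring

end MGraphAux

namespace MGraphAux

open FinGraph
open scoped Classical

variable {G : FinGraph} (σ : RealStructure G)

lemma cardV_split : Fintype.card G.V = Nat.card (RV σ) + Nat.card (NV σ) := by
  letI : Fintype (RV σ) := Fintype.ofFinite _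
  letI : Fintype (NV σ) := Fintype.ofFinite _
  unfold NV RV
  rw [Nat.card_eq_fintype_card, Nat.card_eq_fintype_card]
  have h1 : Fintype.card {v : G.V // ¬ RealV σ v}
      = Fintype.card G.V - Fintype.card {v : G.V // RealV σ v} := by
    convert Fintype.card_subtype_compl _
  have h2 : Fintype.card {v : G.V // RealV σ v} ≤ Fintype.card G.V := by
    have := Fintype.card_le_of_injective (fun x : {v : G.V // RealV σ v} => x.1)
      (fun a b h => Subtype.ext h)
    convert this using 2
  omega

lemma cardE_split (hM : IsMGraph σ) :
    Fintype.card G.E = Nat.card {e : G.E // NonIsolatedRealE σ e} + Nat.card (NE σ) := by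
  letI : Fintype (NE σ) := Fintype.ofFinite _
  have hcongr : Nat.card {e : G.E // NonIsolatedRealE σ e}
      = Nat.card {e : G.E // RealE σ e} :=
    Nat.card_congr (Equiv.subtypeEquivRight (fun e => (realE_iff_nonIso σ hM e).symm))
  rw [hcongr]
  letI : Fintype {e : G.E // RealE σ e} := Fintype.ofFinite _
  unfold NE
  rw [Nat.card_eq_fintype_card, Nat.card_eq_fintype_card]
  have h1 : Fintype.card {e : G.E // ¬ RealE σ e}
      = Fintype.card G.E - Fintype.card {e : G.E // RealE σ e} := by
    convert Fintype.card_subtype_compl _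
  have h2 : Fintype.card {e : G.E // RealE σ e} ≤ Fintype.card G.E := by
    have := Fintype.card_le_of_injective (fun x : {e : G.E // RealE σ e} => x.1)
      (fun a b h => Subtype.ext h)
    convert this using 2
  omega

lemma cardNV : Nat.card (NV σ) = 2 * Nat.card (P σ) := by
  apply card_quot_invol (iNV σ)
  · intro a; exact Subtype.ext (σ.ιV_invol a.1)
  · intro a h
    exact a.2 (congrArg Subtype.val h)
  · intro a b
    show (a.1 = b.1 ∨ σ.ιV a.1 = b.1) ↔ _
    rw [Subtype.ext_iff (p := fun v => ¬ RealV σ v)]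
    exact or_congr Iff.rfl (by rw [Subtype.ext_iff]; exact Iff.rfl)

lemma cardNE : Nat.card (NE σ) = 2 * Nat.card (Fq σ) := by
  apply card_quot_invol (iNE σ)
  · intro a; exact Subtype.ext (σ.ιE_invol a.1)
  · intro a h
    exact a.2 (congrArg Subtype.val h)
  · intro a b
    show (a.1 = b.1 ∨ σ.ιE a.1 = b.1) ↔ _
    rw [Subtype.ext_iff (p := fun e => ¬ RealE σ e)]
    exact or_congr Iff.rfl (by rw [Subtype.ext_iff]; exact Iff.rfl)

lemma cardW_split : Nat.card (W σ) = Nat.card (CompR σ) + Nat.card (P σ) := by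
  unfold W; rw [Nat.card_sum]

lemma connG (hM : IsMGraph σ) (v₀ : G.V) (a : G.V) : ∃ n, reachN G.ψ v₀ n a :=
  reach_of_rtg G.ψ v₀ (hM.1.2 v₀ a)

lemma exists_realV (hM : IsMGraph σ) : Nonempty (RV σ) := by
  by_contra hcon
  rw [not_nonempty_iff] at hcon
  have h0 : Nat.card (RV σ) = 0 := Nat.card_of_isEmpty
  have h1 : Nat.card (CompR σ) = 0 := by
    haveI : IsEmpty (CompR σ) := by
      constructor; intro c
      induction c using Quotient.ind
      exact hcon.false ‹_›
    exact Nat.card_of_isEmpty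
  have h2 : Nat.card {e : G.E // NonIsolatedRealE σ e} = 0 := by
    haveI : IsEmpty {e : G.E // NonIsolatedRealE σ e} :=
      ⟨fun e => hcon.false (realEnd σ e)⟩
    exact Nat.card_of_isEmpty
  have h3 := hM.2.2
  rw [sNum_eq σ hM, genus, numComponents_eq_one hM.1, h0, h1, h2] at h3
  obtain ⟨v₀⟩ := hM.1.1
  have h4 : Nat.card G.V ≤ Nat.card G.E + 1 :=
    card_le G.ψ v₀ (connG σ hM v₀)
  rw [Nat.card_eq_fintype_card, Nat.card_eq_fintype_card] at h4
  omega

lemma cardFq_succ (hM : IsMGraph σ) : Nat.card (Fq σ) + 1 = Nat.card (W σ) := by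
  have h1 := hM.2.2
  rw [sNum_eq σ hM, genus, numComponents_eq_one hM.1] at h1
  have h2 := cardV_split σ
  have h3 := cardE_split σ hM
  have h4 := cardNV σ
  have h5 := cardNE σ
  have h6 := cardW_split σ
  omega

end MGraphAux

namespace MGraphAux

open FinGraph
open scoped Classical

variable {G : FinGraph} (σ : RealStructure G) (hM : IsMGraph σ)

/-- the root: the component of a chosen real vertex -/
noncomputable def rootV : RV σ := (exists_realV σ hM).some

noncomputable def rW : W σ :=
  Sum.inl (Quotient.mk (Relation.EqvGen.setoid (adjR σ)) (rootV σ hM))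

lemma rW_proj : rW σ hM = projW σ (rootV σ hM).1 := by
  rw [rW, projW_real σ (rootV σ hM).2]
  rfl

include hM in
lemma adj_proj {a b : G.V} (h : G.Adj a b) :
    projW σ a = projW σ b ∨ gAdj (qQ σ) (projW σ a) (projW σ b) := by
  obtain ⟨e, he⟩ := h
  by_cases hre : RealE σ e
  · left
    have hni : NonIsolatedRealE σ e := (realE_iff_nonIso σ hM e).mp hre
    have ha : RealV σ a := hni.2 a (by rw [he]; exact Sym2.mem_mk_left a b)
    have hb : RealV σ b := hni.2 b (by rw [he]; exact Sym2.mem_mk_right a b)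
    rw [projW_real σ ha, projW_real σ hb]
    congr 1
    exact realEdge_comp_eq σ hni (a := ⟨a, ha⟩) (b := ⟨b, hb⟩)
      (by rw [he]; exact Sym2.mem_mk_left a b) (by rw [he]; exact Sym2.mem_mk_right a b)
  · right
    refine ⟨Quotient.mk (sE σ) ⟨e, hre⟩, ?_⟩
    rw [qQ_mk, he, Sym2.map_pair_eq]

include hM in
lemma rtg_proj (v w : G.V) :
    Relation.ReflTransGen (gAdj (qQ σ)) (projW σ v) (projW σ w) := by
  have h := hM.1.2 v w
  induction h with
  | refl => exact Relation.ReflTransGen.refl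
  | tail _ hstep ih =>
      rcases adj_proj σ hM hstep with h | h
      · rwa [← h]
      · exact Relation.ReflTransGen.tail ih h

lemma projW_surj : Function.Surjective (projW σ) := by
  rintro (c | p)
  · induction c using Quotient.ind with
    | _ u => exact ⟨u.1, projW_real σ u.2⟩
  · induction p using Quotient.ind with
    | _ u => exact ⟨u.1, projW_nonreal σ u.2⟩

lemma hconnW : ∀ x : W σ, ∃ n, reachN (qQ σ) (rW σ hM) n x := by
  intro x
  apply reach_of_rtg
  obtain ⟨v, rfl⟩ := projW_surj σ x
  rw [rW_proj]
  exact rtg_proj σ hM _ v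

/-- the node of the quotient graph associated with a non-real vertex -/
def nodeOf (v : NV σ) : W σ := Sum.inr (Quotient.mk (sV σ) v)

lemma nodeOf_ne_rW (v : NV σ) : nodeOf σ v ≠ rW σ hM := fun h => by
  rw [nodeOf, rW] at h; exact Sum.inr_ne_inl h

lemma projW_v (v : NV σ) : projW σ v.1 = nodeOf σ v := projW_nonreal σ v.2

lemma exists_lift (v : NV σ) :
    ∃ e : NE σ, Quotient.mk (sE σ) e
        = discS (qQ σ) (rW σ hM) (hconnW σ hM) ⟨nodeOf σ v, nodeOf_ne_rW σ hM v⟩ ∧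
      ∃ p : G.V, G.ψ e.1 = s(v.1, p) ∧
        projW σ p = par (qQ σ) (rW σ hM) (hconnW σ hM) (nodeOf σ v) := by
  set f := discS (qQ σ) (rW σ hM) (hconnW σ hM) ⟨nodeOf σ v, nodeOf_ne_rW σ hM v⟩ with hf
  have hq : qQ σ f = s(par (qQ σ) (rW σ hM) (hconnW σ hM) (nodeOf σ v), nodeOf σ v) :=
    discS_spec _ _ _ _
  obtain ⟨e₀, he₀⟩ := Quotient.exists_rep f
  rw [← he₀, qQ_mk] at hq
  obtain ⟨⟨a, b⟩, hab⟩ := Quot.exists_rep (G.ψ e₀.1)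
  have hab' : G.ψ e₀.1 = s(a, b) := hab.symm
  rw [hab', Sym2.map_pair_eq, Sym2.eq_iff] at hq
  -- helper to build the conclusion from an endpoint equal to v or its conjugate
  rcases hq with ⟨h1, h2⟩ | ⟨h1, h2⟩
  · -- projW a = par, projW b = nodeOf v
    rcases projW_eq_inr σ h2 with hb | hb
    · exact ⟨e₀, he₀, a, by rw [hab', ← hb, Sym2.eq_swap], h1⟩
    · refine ⟨iNE σ e₀, ?_, σ.ιV a, ?_, ?_⟩
      · rw [← he₀]
        apply Quotient.sound
        show (iNE σ e₀).1 = e₀.1 ∨ σ.ιE (iNE σ e₀).1 = e₀.1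
        right; exact σ.ιE_invol e₀.1
      · show G.ψ (σ.ιE e₀.1) = _
        rw [σ.compat, hab', Sym2.map_pair_eq, hb, σ.ιV_invol, Sym2.eq_swap]
      · rw [projW_iota]; exact h1
  · -- projW a = nodeOf v, projW b = par
    rcases projW_eq_inr σ h1 with ha | ha
    · exact ⟨e₀, he₀, b, by rw [hab', ha], h2⟩
    · refine ⟨iNE σ e₀, ?_, σ.ιV b, ?_, ?_⟩
      · rw [← he₀]
        apply Quotient.sound
        show (iNE σ e₀).1 = e₀.1 ∨ σ.ιE (iNE σ e₀).1 = e₀.1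
        right; exact σ.ιE_invol e₀.1
      · show G.ψ (σ.ιE e₀.1) = _
        rw [σ.compat, hab', Sym2.map_pair_eq, ha, σ.ιV_invol]
      · rw [projW_iota]; exact h2

/-- the parent edge of a non-real vertex -/
noncomputable def Ev (v : NV σ) : NE σ := (exists_lift σ hM v).choose

/-- the parent vertex of a non-real vertex -/
noncomputable def pv (v : NV σ) : G.V :=
  (exists_lift σ hM v).choose_spec.2.choose

lemma Ev_class (v : NV σ) :
    Quotient.mk (sE σ) (Ev σ hM v)
      = discS (qQ σ) (rW σ hM) (hconnW σ hM) ⟨nodeOf σ v, nodeOf_ne_rW σ hM v⟩ :=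
  (exists_lift σ hM v).choose_spec.1

lemma Ev_psi (v : NV σ) : G.ψ (Ev σ hM v).1 = s(v.1, pv σ hM v) :=
  (exists_lift σ hM v).choose_spec.2.choose_spec.1

lemma pv_proj (v : NV σ) :
    projW σ (pv σ hM v) = par (qQ σ) (rW σ hM) (hconnW σ hM) (nodeOf σ v) :=
  (exists_lift σ hM v).choose_spec.2.choose_spec.2

lemma par_ne_nodeOf (v : NV σ) :
    par (qQ σ) (rW σ hM) (hconnW σ hM) (nodeOf σ v) ≠ nodeOf σ v := by
  intro h
  have := (par_spec (qQ σ) (rW σ hM) (hconnW σ hM) (nodeOf_ne_rW σ hM v)).2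
  rw [h] at this
  omega

lemma pv_proj_ne (v : NV σ) : projW σ (pv σ hM v) ≠ nodeOf σ v := by
  rw [pv_proj]; exact par_ne_nodeOf σ hM v

/-- uniqueness of the representative of the parent edge through `v` -/
lemma edge_eq_Ev (v : NV σ) {e : NE σ}
    (hcls : Quotient.mk (sE σ) e = Quotient.mk (sE σ) (Ev σ hM v))
    (hmem : v.1 ∈ G.ψ e.1) : e = Ev σ hM v := by
  have h := Quotient.exact hcls
  rcases h with h | h
  · exact Subtype.ext h
  · exfalso
    -- e.1 = ιE (Ev v).1
    have he : e.1 = σ.ιE (Ev σ hM v).1 := by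
      rw [← h, σ.ιE_invol]
    rw [he, σ.compat, Ev_psi σ hM v, Sym2.map_pair_eq, Sym2.mem_iff] at hmem
    rcases hmem with h2 | h2
    · exact v.2 h2.symm
    · -- v.1 = ιV (pv v), so pv v = ιV v.1 and projW pv = nodeOf v
      apply pv_proj_ne σ hM v
      have : pv σ hM v = σ.ιV v.1 := by rw [h2, σ.ιV_invol]
      rw [this, projW_iota]
      exact projW_v σ v

end MGraphAux

namespace MGraphAux

open FinGraph
open scoped Classical

variable {G : FinGraph} (σ : RealStructure G) (hM : IsMGraph σ)

lemma edgeLap_eq (f : G.V → ℤ) (e : G.E) {a b : G.V} (h : G.ψ e = s(a, b)) :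
    edgeLap G f e = fun x =>
      (if x = a then f b - f a else 0) + (if x = b then f a - f b else 0) := by
  rw [edgeLap, h, Sym2.lift_mk]

lemma lap_zero : Lap G (fun _ => 0) = fun _ => 0 := by
  funext x
  rw [Lap]
  apply Finset.sum_eq_zero
  intro e _
  obtain ⟨⟨a, b⟩, hab⟩ := Quot.exists_rep (G.ψ e)
  rw [edgeLap_eq _ _ hab.symm]
  simp

lemma lap_add (f g : G.V → ℤ) : Lap G (f + g) = Lap G f + Lap G g := by
  funext x
  show _ = Lap G f x + Lap G g x
  rw [Lap, Lap, Lap, ← Finset.sum_add_distrib]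
  apply Finset.sum_congr rfl
  intro e _
  obtain ⟨⟨a, b⟩, hab⟩ := Quot.exists_rep (G.ψ e)
  rw [edgeLap_eq _ _ hab.symm, edgeLap_eq (f := f) _ hab.symm, edgeLap_eq (f := g) _ hab.symm]
  dsimp only [Pi.add_apply]
  split_ifs <;> ring

lemma linEquiv_trans {D₁ D₂ D₃ : G.V → ℤ} (h1 : LinEquiv G D₁ D₂) (h2 : LinEquiv G D₂ D₃) :
    LinEquiv G D₁ D₃ := by
  obtain ⟨f, hf⟩ := h1
  obtain ⟨g, hg⟩ := h2
  exact ⟨f + g, by rw [hg, hf, lap_add]; funext x; simp; ring⟩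

lemma linEquiv_refl (D : G.V → ℤ) : LinEquiv G D D :=
  ⟨fun _ => 0, by rw [lap_zero]; funext x; simp⟩

/-- membership of a vertex in the fired set -/
noncomputable def TS (v : NV σ) (x : G.V) : Prop :=
  inSub (qQ σ) (rW σ hM) (hconnW σ hM) (nodeOf σ v) (projW σ x)

/-- the firing function: the indicator of the fired set -/
noncomputable def fireF (v : NV σ) : G.V → ℤ := fun x => if TS σ hM v x then 1 else 0

lemma fireF_iota (v : NV σ) (x : G.V) : fireF σ hM v (σ.ιV x) = fireF σ hM v x := by
  show (if TS σ hM v (σ.ιV x) then (1:ℤ) else 0) = if TS σ hM v x then 1 else 0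
  rw [TS, TS, projW_iota]

lemma TS_v (v : NV σ) : TS σ hM v v.1 := by
  rw [TS, projW_v]
  exact inSub_self _ _ _ _

lemma not_TS_pv (v : NV σ) : ¬ TS σ hM v (pv σ hM v) := by
  rw [TS, pv_proj]
  exact not_inSub_par _ _ _ (nodeOf_ne_rW σ hM v)

lemma not_crossing (v : NV σ) {e : G.E} (he1 : e ≠ (Ev σ hM v).1)
    (he2 : e ≠ σ.ιE (Ev σ hM v).1) {a b : G.V} (hab : G.ψ e = s(a, b)) :
    TS σ hM v a ↔ TS σ hM v b := by
  by_cases hre : RealE σ e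
  · have hni : NonIsolatedRealE σ e := (realE_iff_nonIso σ hM e).mp hre
    have ha : RealV σ a := hni.2 a (by rw [hab]; exact Sym2.mem_mk_left a b)
    have hb : RealV σ b := hni.2 b (by rw [hab]; exact Sym2.mem_mk_right a b)
    have hpr : projW σ a = projW σ b := by
      rw [projW_real σ ha, projW_real σ hb]
      congr 1
      exact realEdge_comp_eq σ hni (a := ⟨a, ha⟩) (b := ⟨b, hb⟩)
        (by rw [hab]; exact Sym2.mem_mk_left a b) (by rw [hab]; exact Sym2.mem_mk_right a b)
    rw [TS, TS, hpr]
  · -- non-real edge: if it crossed, it would be the discovery edge of `nodeOf v`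
    by_contra hcon
    have hcon2 : (TS σ hM v a ∧ ¬ TS σ hM v b) ∨ (TS σ hM v b ∧ ¬ TS σ hM v a) := by
      tauto
    have hq : qQ σ (Quotient.mk (sE σ) ⟨e, hre⟩) = s(projW σ a, projW σ b) := by
      rw [qQ_mk, hab, Sym2.map_pair_eq]
    have hcls : Quotient.mk (sE σ) ⟨e, hre⟩ = Quotient.mk (sE σ) (Ev σ hM v) := by
      rcases hcon2 with ⟨hta, htb⟩ | ⟨hta, htb⟩
      · obtain ⟨-, -, h3⟩ := boundary_eq (qQ σ) (rW σ hM) (hconnW σ hM)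
          (cardFq_succ σ hM) (nodeOf_ne_rW σ hM v) _ hq hta htb
        rw [h3, Ev_class]
      · obtain ⟨-, -, h3⟩ := boundary_eq (qQ σ) (rW σ hM) (hconnW σ hM)
          (cardFq_succ σ hM) (nodeOf_ne_rW σ hM v) (Quotient.mk (sE σ) ⟨e, hre⟩) (by rw [hq, Sym2.eq_swap]) hta htb
        rw [h3, Ev_class]
    have := Quotient.exact hcls
    rcases this with h | h
    · exact he1 h
    · apply he2
      show e = σ.ιE (Ev σ hM v).1
      rw [← h, σ.ιE_invol]

lemma fire_values (v : NV σ) :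
    fireF σ hM v v.1 = 1 ∧ fireF σ hM v (σ.ιV v.1) = 1 ∧
      fireF σ hM v (pv σ hM v) = 0 ∧ fireF σ hM v (σ.ιV (pv σ hM v)) = 0 := by
  refine ⟨if_pos (TS_v σ hM v), ?_, if_neg (not_TS_pv σ hM v), ?_⟩
  · rw [fireF_iota]; exact if_pos (TS_v σ hM v)
  · rw [fireF_iota]; exact if_neg (not_TS_pv σ hM v)

lemma lap_fire (v : NV σ) :
    Lap G (fireF σ hM v) = fun x =>
      (if x = v.1 then -1 else 0) + (if x = σ.ιV v.1 then -1 else 0)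
      + (if x = pv σ hM v then 1 else 0) + (if x = σ.ιV (pv σ hM v) then 1 else 0) := by
  obtain ⟨hf1, hf2, hf3, hf4⟩ := fire_values σ hM v
  funext x
  rw [Lap]
  set e₁ := (Ev σ hM v).1 with he₁
  set e₂ := σ.ιE (Ev σ hM v).1 with he₂
  have hne : e₁ ≠ e₂ := by
    intro h
    exact (Ev σ hM v).2 h.symm
  have hsum : ∑ e : G.E, edgeLap G (fireF σ hM v) e x
      = ∑ e ∈ ({e₁, e₂} : Finset G.E), edgeLap G (fireF σ hM v) e x := by
    symm
    apply Finset.sum_subset (Finset.subset_univ _)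
    intro e _ hnot
    simp only [Finset.mem_insert, Finset.mem_singleton] at hnot
    push_neg at hnot
    obtain ⟨⟨a, b⟩, hab⟩ := Quot.exists_rep (G.ψ e)
    have hiff := not_crossing σ hM v hnot.1 hnot.2 hab.symm
    rw [edgeLap_eq _ _ hab.symm]
    have : fireF σ hM v a = fireF σ hM v b := by
      show (if TS σ hM v a then (1:ℤ) else 0) = if TS σ hM v b then 1 else 0
      rw [if_congr hiff rfl rfl]
    rw [this]
    simp
  rw [hsum, Finset.sum_pair hne]
  have hψ1 : G.ψ e₁ = s(v.1, pv σ hM v) := Ev_psi σ hM v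
  have hψ2 : G.ψ e₂ = s(σ.ιV v.1, σ.ιV (pv σ hM v)) := by
    rw [he₂, σ.compat, hψ1, Sym2.map_pair_eq]
  rw [edgeLap_eq _ _ hψ1, edgeLap_eq _ _ hψ2]
  rw [hf1, hf2, hf3, hf4]
  ring

end MGraphAux

namespace MGraphAux

open FinGraph
open scoped Classical

variable {G : FinGraph} (σ : RealStructure G) (hM : IsMGraph σ)

noncomputable def mZ (x : G.V) : ℤ :=
  if RealV σ x then 0 else (dist (qQ σ) (rW σ hM) (hconnW σ hM) (projW σ x) : ℤ)

lemma mZ_nonneg (x : G.V) : 0 ≤ mZ σ hM x := by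
  rw [mZ]; split_ifs
  · exact le_refl _
  · exact Int.natCast_nonneg _

lemma mZ_iota (x : G.V) : mZ σ hM (σ.ιV x) = mZ σ hM x := by
  rw [mZ, mZ, projW_iota, if_congr (realV_iota σ) rfl rfl]

/-- the potential of a divisor -/
noncomputable def Phi (D : G.V → ℤ) : ℤ := ∑ x, D x * mZ σ hM x

lemma Phi_nonneg {D : G.V → ℤ} (hD : Eff D) : 0 ≤ Phi σ hM D :=
  Finset.sum_nonneg fun x _ => mul_nonneg (hD x) (mZ_nonneg σ hM x)

lemma sum_ite_mul (a : G.V) (c : ℤ) (m : G.V → ℤ) :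
    ∑ x : G.V, (if x = a then c else 0) * m x = c * m a := by
  rw [Finset.sum_eq_single a]
  · rw [if_pos rfl]
  · intro b _ hb; rw [if_neg hb, zero_mul]
  · intro h; exact absurd (Finset.mem_univ a) h

lemma iota_eq_iff (x c : G.V) : σ.ιV x = c ↔ x = σ.ιV c :=
  ⟨fun h => by rw [← h, σ.ιV_invol], fun h => by rw [h, σ.ιV_invol]⟩

lemma step (v : NV σ) {D : G.V → ℤ} (hEff : Eff D) (hReal : IsRealDiv σ D)
    (hpos : 1 ≤ D v.1) :
    ∃ D₁ : G.V → ℤ, LinEquiv G D D₁ ∧ Eff D₁ ∧ IsRealDiv σ D₁ ∧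
      Phi σ hM D₁ + 2 ≤ Phi σ hM D := by
  set p := pv σ hM v with hp
  set L : G.V → ℤ := fun x =>
      (if x = v.1 then -1 else 0) + (if x = σ.ιV v.1 then -1 else 0)
      + (if x = p then 1 else 0) + (if x = σ.ιV p then 1 else 0) with hL
  -- basic distinctness facts
  have hvv : v.1 ≠ σ.ιV v.1 := fun h => v.2 h.symm
  have hprojp : projW σ p ≠ projW σ v.1 := by
    rw [projW_v]; exact pv_proj_ne σ hM v
  have hp1 : p ≠ v.1 := fun h => hprojp (congrArg _ h)
  have hp2 : p ≠ σ.ιV v.1 := fun h => hprojp (by rw [h, projW_iota])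
  have hp3 : σ.ιV p ≠ v.1 := fun h => hp2 (by rw [← h, σ.ιV_invol])
  have hp4 : σ.ιV p ≠ σ.ιV v.1 := fun h => hp1 (by
    have := congrArg σ.ιV h
    rwa [σ.ιV_invol, σ.ιV_invol] at this)
  have hDiv : D (σ.ιV v.1) = D v.1 := congrFun hReal v.1
  refine ⟨fun x => D x + L x, ?_, ?_, ?_, ?_⟩
  · refine ⟨fireF σ hM v, ?_⟩
    funext x
    rw [Pi.add_apply, lap_fire σ hM v]
  · -- effectiveness
    intro x
    show 0 ≤ D x + L x
    simp only [hL]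
    by_cases hx1 : x = v.1
    · subst hx1
      rw [if_pos rfl, if_neg hvv, if_neg (fun h => hp1 h.symm), if_neg (fun h => hp3 h.symm)]
      omega
    · by_cases hx2 : x = σ.ιV v.1
      · subst hx2
        rw [if_neg (fun h => hvv h.symm), if_pos rfl, if_neg (fun h => hp2 h.symm),
          if_neg (fun h => hp4 h.symm)]
        omega
      · have := hEff x
        rw [if_neg hx1, if_neg hx2]
        split_ifs <;> omega
  · -- reality
    funext x
    show D (σ.ιV x) + L (σ.ιV x) = D x + L x
    have hDx : D (σ.ιV x) = D x := congrFun hReal x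
    rw [hDx, hL]
    have e1 : (σ.ιV x = v.1) = (x = σ.ιV v.1) := propext (iota_eq_iff σ x v.1)
    have e2 : (σ.ιV x = σ.ιV v.1) = (x = v.1) := propext (by
      rw [iota_eq_iff σ x (σ.ιV v.1), σ.ιV_invol])
    have e3 : (σ.ιV x = p) = (x = σ.ιV p) := propext (iota_eq_iff σ x p)
    have e4 : (σ.ιV x = σ.ιV p) = (x = p) := propext (by
      rw [iota_eq_iff σ x (σ.ιV p), σ.ιV_invol])
    simp only [e1, e2, e3, e4]
    ring
  · -- the potential decreases
    have hexp : Phi σ hM (fun x => D x + L x)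
        = Phi σ hM D - mZ σ hM v.1 - mZ σ hM (σ.ιV v.1) + mZ σ hM p + mZ σ hM (σ.ιV p) := by
      rw [Phi, Phi]
      calc ∑ x : G.V, (D x + L x) * mZ σ hM x
          = ∑ x : G.V, (D x * mZ σ hM x + ((if x = v.1 then (-1:ℤ) else 0) * mZ σ hM x
            + ((if x = σ.ιV v.1 then (-1:ℤ) else 0) * mZ σ hM x
            + ((if x = p then (1:ℤ) else 0) * mZ σ hM x
            + (if x = σ.ιV p then (1:ℤ) else 0) * mZ σ hM x)))) := by
            refine Finset.sum_congr rfl (fun x _ => ?_)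
            simp only [hL]
            ring
        _ = _ := by
            rw [Finset.sum_add_distrib, Finset.sum_add_distrib, Finset.sum_add_distrib,
              Finset.sum_add_distrib, sum_ite_mul, sum_ite_mul, sum_ite_mul, sum_ite_mul]
            ring
    rw [hexp]
    have hmv : mZ σ hM v.1
        = (dist (qQ σ) (rW σ hM) (hconnW σ hM) (nodeOf σ v) : ℤ) := by
      rw [mZ, if_neg v.2, projW_v]
    have hmiv : mZ σ hM (σ.ιV v.1) = mZ σ hM v.1 := mZ_iota σ hM v.1
    have hmip : mZ σ hM (σ.ιV p) = mZ σ hM p := mZ_iota σ hM p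
    have hdpos : 0 < dist (qQ σ) (rW σ hM) (hconnW σ hM) (nodeOf σ v) :=
      dist_pos _ _ _ (nodeOf_ne_rW σ hM v)
    have hmp : mZ σ hM p ≤ mZ σ hM v.1 - 1 := by
      rw [hmv, mZ]
      split_ifs
      · omega
      · rw [hp, pv_proj σ hM v]
        have := (par_spec (qQ σ) (rW σ hM) (hconnW σ hM) (nodeOf_ne_rW σ hM v)).2
        omega
    omega

lemma main_ind : ∀ n : ℕ, ∀ D : G.V → ℤ, Eff D → IsRealDiv σ D →
    (Phi σ hM D).toNat = n →
    ∃ D' : G.V → ℤ, LinEquiv G D D' ∧ Eff D' ∧ IsRealDiv σ D' ∧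
      ∀ x : G.V, D' x ≠ 0 → RealV σ x := by
  intro n
  induction n using Nat.strong_induction_on with
  | _ n ih =>
    intro D hEff hReal hn
    by_cases hbase : ∀ x : G.V, ¬ RealV σ x → D x = 0
    · refine ⟨D, linEquiv_refl D, hEff, hReal, fun x hx => ?_⟩
      by_contra h
      exact hx (hbase x h)
    · push_neg at hbase
      obtain ⟨x₀, hx₀, hD₀⟩ := hbase
      have hpos : 1 ≤ D x₀ := by
        have := hEff x₀
        omega
      obtain ⟨D₁, hle, hEff₁, hReal₁, hphi⟩ := step σ hM ⟨x₀, hx₀⟩ hEff hReal hpos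
      have hlt : (Phi σ hM D₁).toNat < n := by
        have h1 := Phi_nonneg σ hM hEff₁
        have h2 := Phi_nonneg σ hM hEff
        omega
      obtain ⟨D', h1, h2, h3, h4⟩ := ih _ hlt D₁ hEff₁ hReal₁ rfl
      exact ⟨D', linEquiv_trans hle h1, h2, h3, h4⟩

end MGraphAux

open FinGraph in
/-- On an M-graph, every effective real divisor is linearly
equivalent to a totally real effective divisor. -/
theorem mGraph_totally_real (G : FinGraph) (σ : RealStructure G)
    (hM : IsMGraph σ) (D : G.V → ℤ) (hD : IsRealDiv σ D) (hDe : Eff D) :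
    ∃ D' : G.V → ℤ, LinEquiv G D D' ∧ Eff D' ∧ IsRealDiv σ D' ∧
      (∀ v : G.V, D' v ≠ 0 → RealV σ v) := by
  obtain ⟨D', h1, h2, h3, h4⟩ :=
    MGraphAux.main_ind σ hM (MGraphAux.Phi σ hM D).toNat D hDe hD rfl
  exact ⟨D', h1, h2, h3, h4⟩
end
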